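/- arXiv:1905.00257 — 10 statements merged into one kernel-verified Lean document; each statement's English description precedes it below -/
import Mathlib

section
/- For every r > 0 and every λ ∈ ℂ, the characteristic polynomial of B(r) satisfies det(B(r) − λ·I₄) = λ⁴ − 2(r^{2ρ}+r^{2θ})λ³ + ((r^{2ρ}+r^{2θ})² + (a²+b²)r²)λ² − (a²+b²)r²(r^{2ρ}+r^{2θ})λ + a²b²r⁴. -/
noncomputable section

/-- The matrix `B₀` with rows (1,0,1,0), (0,1,0,1), (1,0,1,0), (0,1,0,1). -/
def B0 : Matrix (Fin 4) (Fin 4) ℂ :=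
  !![1,0,1,0; 0,1,0,1; 1,0,1,0; 0,1,0,1]

/-- The matrix `B₁ = diag(−b, −a, b, a)`. -/
def B1 (a b : ℝ) : Matrix (Fin 4) (Fin 4) ℂ :=
  !![-(b:ℂ),0,0,0; 0,-(a:ℂ),0,0; 0,0,(b:ℂ),0; 0,0,0,(a:ℂ)]

/-- The coefficient matrix `B(r) = (1/2)(r^{2ρ}+r^{2θ})B₀ + i r B₁`. -/
def Bmat (a b ρ θ r : ℝ) : Matrix (Fin 4) (Fin 4) ℂ :=
  (((1/2) * (r ^ (2*ρ) + r ^ (2*θ)) : ℝ) : ℂ) • B0 + (Complex.I * (r : ℂ)) • B1 a b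

lemma det_fin_four' (A : Matrix (Fin 4) (Fin 4) ℂ) :
    A.det =
      A 0 0 * (A 1 1 * (A 2 2 * A 3 3 - A 2 3 * A 3 2) - A 1 2 * (A 2 1 * A 3 3 - A 2 3 * A 3 1)
          + A 1 3 * (A 2 1 * A 3 2 - A 2 2 * A 3 1))
      - A 0 1 * (A 1 0 * (A 2 2 * A 3 3 - A 2 3 * A 3 2) - A 1 2 * (A 2 0 * A 3 3 - A 2 3 * A 3 0)
          + A 1 3 * (A 2 0 * A 3 2 - A 2 2 * A 3 0))
      + A 0 2 * (A 1 0 * (A 2 1 * A 3 3 - A 2 3 * A 3 1) - A 1 1 * (A 2 0 * A 3 3 - A 2 3 * A 3 0)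
          + A 1 3 * (A 2 0 * A 3 1 - A 2 1 * A 3 0))
      - A 0 3 * (A 1 0 * (A 2 1 * A 3 2 - A 2 2 * A 3 1) - A 1 1 * (A 2 0 * A 3 2 - A 2 2 * A 3 0)
          + A 1 2 * (A 2 0 * A 3 1 - A 2 1 * A 3 0)) := by
  rw [Matrix.det_succ_row_zero]
  simp [Fin.sum_univ_succ, Matrix.det_fin_three, Matrix.submatrix, Fin.succAbove,
    show (Fin.succ 2 : Fin 4) = 3 from rfl, show (Fin.castSucc 2 : Fin 4) = 2 from rfl,
    show ((1:Fin 4) < 3) from by decide]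
  ring

theorem stmt0 (a b ρ θ : ℝ) (ha : 0 < a) (hab : a < b)
    (hρ0 : 0 ≤ ρ) (hρ : ρ < 1/2) (hθ : 1/2 < θ) (hθ1 : θ ≤ 1)
    (r : ℝ) (hr : 0 < r) (lam : ℂ) :
    (Bmat a b ρ θ r - lam • (1 : Matrix (Fin 4) (Fin 4) ℂ)).det =
      lam ^ 4 - 2 * ((r ^ (2*ρ) + r ^ (2*θ) : ℝ) : ℂ) * lam ^ 3
        + (((r ^ (2*ρ) + r ^ (2*θ) : ℝ) : ℂ) ^ 2 + ((a^2 + b^2 : ℝ) : ℂ) * (r : ℂ) ^ 2) * lam ^ 2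
        - ((a^2 + b^2 : ℝ) : ℂ) * (r : ℂ) ^ 2 * ((r ^ (2*ρ) + r ^ (2*θ) : ℝ) : ℂ) * lam
        + ((a^2 * b^2 : ℝ) : ℂ) * (r : ℂ) ^ 4 := by
  simp only [Bmat, B0, B1, det_fin_four', Matrix.sub_apply, Matrix.add_apply,
    Matrix.smul_apply, Matrix.one_apply, Matrix.cons_val', Matrix.cons_val_zero,
    Matrix.cons_val_one, Matrix.head_cons, Matrix.empty_val', Matrix.cons_val_fin_one,
    Matrix.head_fin_const, Matrix.cons_val_two, Matrix.cons_val_three, Matrix.tail_cons,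
    smul_eq_mul]
  norm_num [Matrix.one_apply, Matrix.vecHead, Matrix.vecTail]
  push_cast
  ring_nf
  rw [show Complex.I ^ 4 = 1 by rw [show (4:ℕ) = 2*2 from rfl, pow_mul, Complex.I_sq]; ring]
  simp only [Complex.I_sq]
  ring

end
end

section
/- For every r > 0 there is no real number d ≠ 0 satisfying simultaneously d⁴ − ((r^{2ρ}+r^{2θ})² + (a²+b²)r²)d² + a²b²r⁴ = 0 and d·(r^{2ρ}+r^{2θ})·(2d² − (a²+b²)r²) = 0; indeed these two equations together with d ≠ 0 and r > 0 would force −(b²−a²)²r² = 2(a²+b²)(r^{2ρ}+r^{2θ})², which is impossible since b > a > 0. -/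
/-- No nonzero real `d` solves simultaneously the real and imaginary parts of the
characteristic equation of `B(r)` at a purely imaginary eigenvalue `λ = i d`;
indeed the two equations force `−(b²−a²)²r² = 2(a²+b²)(r^{2ρ}+r^{2θ})²`,
which is impossible since `b > a > 0`. -/
theorem stmt1 (a b ρ θ : ℝ) (ha : 0 < a) (hab : a < b)
    (hρ0 : 0 ≤ ρ) (hρ : ρ < 1/2) (hθ : 1/2 < θ) (hθ1 : θ ≤ 1)
    (r : ℝ) (hr : 0 < r) :
    (¬ ∃ d : ℝ, d ≠ 0 ∧
        d ^ 4 - ((r ^ (2*ρ) + r ^ (2*θ)) ^ 2 + (a^2 + b^2) * r ^ 2) * d ^ 2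
          + a^2 * b^2 * r ^ 4 = 0 ∧
        d * (r ^ (2*ρ) + r ^ (2*θ)) * (2 * d ^ 2 - (a^2 + b^2) * r ^ 2) = 0) ∧
    (∀ d : ℝ, d ≠ 0 →
        d ^ 4 - ((r ^ (2*ρ) + r ^ (2*θ)) ^ 2 + (a^2 + b^2) * r ^ 2) * d ^ 2
          + a^2 * b^2 * r ^ 4 = 0 →
        d * (r ^ (2*ρ) + r ^ (2*θ)) * (2 * d ^ 2 - (a^2 + b^2) * r ^ 2) = 0 →
        -((b^2 - a^2) ^ 2) * r ^ 2 = 2 * (a^2 + b^2) * (r ^ (2*ρ) + r ^ (2*θ)) ^ 2) ∧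
    ¬ (-((b^2 - a^2) ^ 2) * r ^ 2 = 2 * (a^2 + b^2) * (r ^ (2*ρ) + r ^ (2*θ)) ^ 2) := by
  have hs : 0 < r ^ (2*ρ) + r ^ (2*θ) :=
    add_pos (Real.rpow_pos_of_pos hr _) (Real.rpow_pos_of_pos hr _)
  set s := r ^ (2*ρ) + r ^ (2*θ) with hsdef
  have key : ∀ d : ℝ, d ≠ 0 →
      d ^ 4 - (s ^ 2 + (a^2 + b^2) * r ^ 2) * d ^ 2 + a^2 * b^2 * r ^ 4 = 0 →
      d * s * (2 * d ^ 2 - (a^2 + b^2) * r ^ 2) = 0 →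
      -((b^2 - a^2) ^ 2) * r ^ 2 = 2 * (a^2 + b^2) * s ^ 2 := by
    intro d hd h1 h2
    have h3 : 2 * d ^ 2 - (a^2 + b^2) * r ^ 2 = 0 := by
      rcases mul_eq_zero.1 h2 with h | h
      · rcases mul_eq_zero.1 h with h' | h'
        · exact absurd h' hd
        · exact absurd h' hs.ne'
      · exact h
    have hr2 : (0:ℝ) < r ^ 2 := by positivity
    have h5 : (-((b^2 - a^2) ^ 2) * r ^ 2 - 2 * (a^2 + b^2) * s ^ 2) * r ^ 2 = 0 := by
      linear_combination 4 * h1 + ((a^2+b^2)*r^2 + 2*s^2 - 2*d^2) * h3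
    have := mul_eq_zero.1 h5
    rcases this with h | h
    · linarith
    · exact absurd h hr2.ne'
  have himp : ¬ (-((b^2 - a^2) ^ 2) * r ^ 2 = 2 * (a^2 + b^2) * s ^ 2) := by
    intro h
    have hb2 : a ^ 2 < b ^ 2 := by nlinarith
    have h1 : 0 < (b^2 - a^2) ^ 2 * r ^ 2 :=
      mul_pos (pow_pos (sub_pos.2 hb2) 2) (pow_pos hr 2)
    have h2 : 0 < 2 * (a^2 + b^2) * s ^ 2 := by positivity
    linarith
  refine ⟨?_, key, himp⟩
  rintro ⟨d, hd, h1, h2⟩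
  exact himp (key d hd h1 h2)
end

section
/- For every r > 0, no eigenvalue of B(r) lies on the imaginary axis: every root λ ∈ ℂ of the characteristic polynomial of B(r) satisfies Re λ ≠ 0. -/
noncomputable section

open Polynomial Matrix

set_option maxHeartbeats 1000000 in
private lemma det4_aux (p q u v w x y z : ℂ) :
    (!![p,0,q,0; 0,u,0,v; w,0,x,0; 0,y,0,z]).det = (p*x - q*w) * (u*z - v*y) := by
  simp [Matrix.det_succ_row_zero, Fin.sum_univ_succ, Fin.succAbove]
  ring

private lemma quad_aux (s c : ℝ) (hs : 0 < s) (hc : 0 < c) (lam : ℂ)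
    (h : lam^2 - 2*(s:ℂ)*lam + (c:ℂ)^2 = 0) : lam.re ≠ 0 := by
  intro h0
  have him := congrArg Complex.im h
  simp [pow_two, Complex.add_im, Complex.sub_im, Complex.mul_im, h0, hs.ne'] at him
  have hl : lam = 0 := Complex.ext h0 him
  rw [hl] at h
  simp at h
  exact absurd h hc.ne'

/-- For every `r > 0`, no eigenvalue of `B(r)` lies on the imaginary axis: every root of the
characteristic polynomial of `B(r)` has nonzero real part. -/
theorem stmt2 (a b ρ θ : ℝ) (ha : 0 < a) (hab : a < b)
    (hρ0 : 0 ≤ ρ) (hρ : ρ < 1/2) (hθ : 1/2 < θ) (hθ1 : θ ≤ 1)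
    (r : ℝ) (hr : 0 < r) (lam : ℂ)
    (hroot : (Bmat a b ρ θ r).charpoly.IsRoot lam) :
    lam.re ≠ 0 := by
  obtain ⟨s, hs_def⟩ : ∃ s : ℝ, s = (1/2) * (r ^ (2*ρ) + r ^ (2*θ)) := ⟨_, rfl⟩
  have hs : 0 < s := by
    have h1 : (0:ℝ) < r ^ (2*ρ) := Real.rpow_pos_of_pos hr _
    have h2 : (0:ℝ) < r ^ (2*θ) := Real.rpow_pos_of_pos hr _
    rw [hs_def]; positivity
  have key : (Matrix.of (fun i j => (if i = j then lam else 0) - Bmat a b ρ θ r i j)).det = 0 := by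
    have := hroot
    rw [Polynomial.IsRoot, Matrix.charpoly, ← Polynomial.coe_evalRingHom, RingHom.map_det] at this
    convert this using 2
    ext i j
    simp only [charmatrix_apply, Matrix.diagonal, RingHom.mapMatrix_apply, Matrix.map_apply,
      Matrix.of_apply, map_sub, coe_evalRingHom, eval_C]
    split_ifs <;> simp
  have hN : (Matrix.of (fun i j => (if i = j then lam else 0) - Bmat a b ρ θ r i j)) =
      !![lam - (s:ℂ) + Complex.I*r*b, 0, -(s:ℂ), 0;
         0, lam - (s:ℂ) + Complex.I*r*a, 0, -(s:ℂ);
         -(s:ℂ), 0, lam - (s:ℂ) - Complex.I*r*b, 0;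
         0, -(s:ℂ), 0, lam - (s:ℂ) - Complex.I*r*a] := by
    ext i j
    fin_cases i <;> fin_cases j <;>
      simp [Bmat, B0, B1, Matrix.vecHead, Matrix.vecTail, hs_def] <;> push_cast <;> ring
  rw [hN, det4_aux] at key
  have hfact : (lam^2 - 2*(s:ℂ)*lam + ((r*b:ℝ):ℂ)^2) *
      (lam^2 - 2*(s:ℂ)*lam + ((r*a:ℝ):ℂ)^2) = 0 := by
    rw [← key]
    push_cast
    ring_nf
    simp only [Complex.I_sq, Complex.I_pow_four]
    ring
  rcases mul_eq_zero.mp hfact with h | h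
  · exact quad_aux s (r*b) hs (mul_pos hr (ha.trans hab)) lam h
  · exact quad_aux s (r*a) hs (mul_pos hr ha) lam h

end
end

section
/- (Small-frequency eigenvalue asymptotics, case ρ+θ < 1) Assume additionally ρ + θ < 1. Then there exist ε ∈ (0,1) and functions λ₁, λ₂, λ₃, λ₄ : (0,ε) → ℂ such that for every r ∈ (0,ε) the multiset of roots (with multiplicity) of the characteristic polynomial of B(r) is {λ₁(r), λ₂(r), λ₃(r), λ₄(r)}, and as r → 0⁺: λ₁(r) − b²r^{2−2ρ} = O(r^{1+2θ−2ρ}), λ₂(r) − a²r^{2−2ρ} = O(r^{1+2θ−2ρ}), λ₃(r) − (r^{2ρ} + r^{2θ} − b²r^{2−2ρ}) = O(r^{1+2θ−2ρ}), and λ₄(r) − (r^{2ρ} + r^{2θ} − a²r^{2−2ρ}) = O(r^{1+2θ−2ρ}). -/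
noncomputable section

open Asymptotics Filter Topology Polynomial Matrix

lemma charpoly_aux {R : Type*} [CommRing R] (s u α β : R) :
    (!![s - u*α, 0, s, 0; 0, s - u*β, 0, s; s, 0, s + u*α, 0; 0, s, 0, s + u*β]).charpoly
    = (X^2 - 2*C s*X - C u^2 * C α^2) * (X^2 - 2*C s*X - C u^2 * C β^2) := by
  have hcm : charmatrix (!![s - u*α, 0, s, 0; 0, s - u*β, 0, s; s, 0, s + u*α, 0; 0, s, 0, s + u*β]) =
      !![X - C (s - u*α), 0, -C s, 0; 0, X - C (s - u*β), 0, -C s;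
         -C s, 0, X - C (s + u*α), 0; 0, -C s, 0, X - C (s + u*β)] := by
    ext i j
    fin_cases i <;> fin_cases j <;>
      simp [charmatrix_apply, Matrix.diagonal]
  rw [Matrix.charpoly, hcm]
  have h22 : Fin.succAbove (2:Fin 4) (2:Fin 3) = 3 := rfl
  simp [Matrix.det_succ_row_zero, Fin.sum_univ_succ, h22, map_sub, map_add, _root_.map_mul]
  ring

lemma quad_factor {R : Type*} [CommRing R] (s c x y : R) (h1 : x + y = 2*s) (h2 : x*y = c) :
    X^2 - 2*C s*X + C c = (X - C x)*(X - C y) := by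
  have hexp : (X - C x)*(X - C y) = X^2 - (C x + C y)*X + C x*C y := by ring
  have hC1 : C x + C y = 2 * C s := by rw [← C_add, h1, two_mul, C_add, ← two_mul]
  have hC2 : C x * C y = C c := by rw [← C_mul, h2]
  rw [hexp, hC1, hC2]

lemma tnn {b ρ θ r : ℝ} (hb : 0 < b) (hr0 : 0 < r) (hrs : 2*b*r ≤ r^(2*ρ)) :
    0 ≤ (1/2*(r^(2*ρ)+r^(2*θ)))^2 - b^2*r^2 := by
  have hθpos : (0:ℝ) < r^(2*θ) := Real.rpow_pos_of_pos hr0 _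
  have hbr : 0 < b*r := mul_pos hb hr0
  have h1 : 0 ≤ 1/2*(r^(2*ρ)+r^(2*θ)) - b*r := by nlinarith
  have h2 : 0 ≤ 1/2*(r^(2*ρ)+r^(2*θ)) + b*r := by nlinarith
  nlinarith [mul_nonneg h1 h2]

lemma key {b ρ θ r : ℝ} (hb : 0 < b) (h2ρ : 2*ρ ≤ 1) (h3 : 2*θ + 4*ρ ≤ 3)
    (hr0 : 0 < r) (hr1 : r ≤ 1) (hrs : 2*b*r ≤ r^(2*ρ)) :
    |(1/2*(r^(2*ρ)+r^(2*θ)) - Real.sqrt ((1/2*(r^(2*ρ)+r^(2*θ)))^2 - b^2*r^2)) - b^2*r^(2-2*ρ)|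
      ≤ (2*b^2+4*b^4) * r^(1+2*θ-2*ρ) := by
  have hρpos : (0:ℝ) < r ^ (2*ρ) := Real.rpow_pos_of_pos hr0 _
  have hθpos : (0:ℝ) < r ^ (2*θ) := Real.rpow_pos_of_pos hr0 _
  set s : ℝ := 1/2*(r^(2*ρ)+r^(2*θ)) with hs
  have hspos : 0 < s := by rw [hs]; positivity
  have ht0 : 0 ≤ s^2 - b^2*r^2 := tnn hb hr0 hrs
  set q := Real.sqrt (s^2 - b^2*r^2) with hqdef
  have hq2 : q^2 = s^2 - b^2*r^2 := Real.sq_sqrt ht0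
  have hq0 : 0 ≤ q := Real.sqrt_nonneg _
  have hbr : 0 < b*r := mul_pos hb hr0
  have hqs : q ≤ s := by nlinarith
  have hE2 : r^(2-2*ρ) * r^(2*ρ) = r^2 := by
    rw [← Real.rpow_add hr0, show 2-2*ρ+2*ρ = ((2:ℕ):ℝ) by norm_num, Real.rpow_natCast]
  set f := s - q with hf
  have hf0 : 0 ≤ f := sub_nonneg.2 hqs
  have hfs : f * (s + q) = b^2*r^2 := by rw [hf]; nlinarith
  have hfub2 : f ≤ 2*b^2*r^(2-2*ρ) := by
    have h1 : r^(2*ρ) ≤ 2*s := by rw [hs]; nlinarith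
    have h2 : f * r^(2*ρ) ≤ 2*(b^2*r^2) := by nlinarith
    nlinarith [hρpos]
  have h2s : r^(2*ρ) + r^(2*θ) = 2*s := by rw [hs]; ring
  have hmain : (f - b^2*r^(2-2*ρ)) * r^(2*ρ) = f * (f - r^(2*θ)) := by
    linear_combination (-b^2)*hE2 - hfs + f*h2s - f*hf - 2*hq2
  have habs : |f - b^2*r^(2-2*ρ)| * r^(2*ρ) ≤ ((2*b^2+4*b^4) * r^(1+2*θ-2*ρ)) * r^(2*ρ) := by
    have hL : |f - b^2*r^(2-2*ρ)| * r^(2*ρ) = |f*(f - r^(2*θ))| := by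
      rw [← hmain, abs_mul, abs_of_pos hρpos]
    rw [hL]
    have h1 : |f*(f - r^(2*θ))| ≤ f*(f + r^(2*θ)) := by
      rw [abs_mul, abs_of_nonneg hf0]
      exact mul_le_mul_of_nonneg_left ((abs_sub _ _).trans (by
        rw [abs_of_nonneg hf0, abs_of_nonneg hθpos.le])) hf0
    have h2 : f*(f + r^(2*θ)) ≤ 2*b^2*r^(2-2*ρ)*(2*b^2*r^(2-2*ρ) + r^(2*θ)) := by
      have : 0 ≤ 2*b^2*r^(2-2*ρ) := by positivity
      nlinarith [hθpos]
    have hE3 : r^(2-2*ρ)*r^(2-2*ρ) = r^(4-4*ρ) := by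
      rw [← Real.rpow_add hr0]; ring_nf
    have hE4 : r^(2-2*ρ)*r^(2*θ) = r^(2-2*ρ+2*θ) := by rw [← Real.rpow_add hr0]
    have hE5 : r^(1+2*θ-2*ρ)*r^(2*ρ) = r^(1+2*θ) := by
      rw [← Real.rpow_add hr0]; ring_nf
    have h4 : r^(4-4*ρ) ≤ r^(1+2*θ) :=
      Real.rpow_le_rpow_of_exponent_ge hr0 hr1 (by linarith)
    have h5 : r^(2-2*ρ+2*θ) ≤ r^(1+2*θ) :=
      Real.rpow_le_rpow_of_exponent_ge hr0 hr1 (by linarith)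
    calc |f*(f - r^(2*θ))| ≤ f*(f + r^(2*θ)) := h1
      _ ≤ 2*b^2*r^(2-2*ρ)*(2*b^2*r^(2-2*ρ) + r^(2*θ)) := h2
      _ = 4*b^4*(r^(2-2*ρ)*r^(2-2*ρ)) + 2*b^2*(r^(2-2*ρ)*r^(2*θ)) := by ring
      _ = 4*b^4*r^(4-4*ρ) + 2*b^2*r^(2-2*ρ+2*θ) := by rw [hE3, hE4]
      _ ≤ 4*b^4*r^(1+2*θ) + 2*b^2*r^(1+2*θ) := by
          exact add_le_add (mul_le_mul_of_nonneg_left h4 (by positivity))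
            (mul_le_mul_of_nonneg_left h5 (by positivity))
      _ = ((2*b^2+4*b^4) * r^(1+2*θ-2*ρ)) * r^(2*ρ) := by
          rw [show ((2*b^2+4*b^4) * r^(1+2*θ-2*ρ)) * r^(2*ρ)
              = (2*b^2+4*b^4) * (r^(1+2*θ-2*ρ) * r^(2*ρ)) from by ring, hE5]; ring
  exact le_of_mul_le_mul_right habs hρpos

set_option maxHeartbeats 2000000 in
/-- Small-frequency eigenvalue asymptotics in the case `ρ + θ < 1`. -/
theorem stmt4 (a b ρ θ : ℝ) (ha : 0 < a) (hab : a < b)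
    (hρ0 : 0 ≤ ρ) (hρ : ρ < 1/2) (hθ : 1/2 < θ) (hθ1 : θ ≤ 1)
    (hsum : ρ + θ < 1) :
    ∃ ε : ℝ, 0 < ε ∧ ε < 1 ∧ ∃ l₁ l₂ l₃ l₄ : ℝ → ℂ,
      (∀ r : ℝ, 0 < r → r < ε →
        (Bmat a b ρ θ r).charpoly.roots = {l₁ r, l₂ r, l₃ r, l₄ r}) ∧
      (fun r : ℝ => l₁ r - ((b^2 * r ^ (2 - 2*ρ) : ℝ) : ℂ))
        =O[𝓝[>] (0:ℝ)] (fun r : ℝ => r ^ (1 + 2*θ - 2*ρ)) ∧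
      (fun r : ℝ => l₂ r - ((a^2 * r ^ (2 - 2*ρ) : ℝ) : ℂ))
        =O[𝓝[>] (0:ℝ)] (fun r : ℝ => r ^ (1 + 2*θ - 2*ρ)) ∧
      (fun r : ℝ => l₃ r - ((r ^ (2*ρ) + r ^ (2*θ) - b^2 * r ^ (2 - 2*ρ) : ℝ) : ℂ))
        =O[𝓝[>] (0:ℝ)] (fun r : ℝ => r ^ (1 + 2*θ - 2*ρ)) ∧
      (fun r : ℝ => l₄ r - ((r ^ (2*ρ) + r ^ (2*θ) - a^2 * r ^ (2 - 2*ρ) : ℝ) : ℂ))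
        =O[𝓝[>] (0:ℝ)] (fun r : ℝ => r ^ (1 + 2*θ - 2*ρ)) := by
  have hb : 0 < a := ha
  have hb' : 0 < b := lt_trans ha hab
  set ε : ℝ := min (1/2) ((1/(2*b))^(1/(1-2*ρ))) with hε
  have hεpos : 0 < ε := by
    apply lt_min (by norm_num)
    exact Real.rpow_pos_of_pos (by positivity) _
  have hε1 : ε < 1 := lt_of_le_of_lt (min_le_left _ _) (by norm_num)
  have hgood : ∀ r : ℝ, 0 < r → r < ε → r ≤ 1 ∧ 2*b*r ≤ r^(2*ρ) := by
    intro r hr0 hrε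
    constructor
    · linarith [lt_of_lt_of_le hrε (min_le_left _ _)]
    · have h1 : r < (1/(2*b))^(1/(1-2*ρ)) := lt_of_lt_of_le hrε (min_le_right _ _)
      have hden : (0:ℝ) < 1 - 2*ρ := by linarith
      have hc : (0:ℝ) < 1/(2*b) := by positivity
      have h2 : r^(1-2*ρ) ≤ ((1/(2*b))^(1/(1-2*ρ)))^(1-2*ρ) :=
        Real.rpow_le_rpow hr0.le h1.le hden.le
      have h3 : ((1/(2*b))^(1/(1-2*ρ)))^(1-2*ρ) = 1/(2*b) := by
        rw [← Real.rpow_mul hc.le, one_div_mul_cancel hden.ne', Real.rpow_one]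
      have h4 : r^(1-2*ρ)*r^(2*ρ) = r := by
        rw [← Real.rpow_add hr0, show 1-2*ρ+2*ρ = (1:ℝ) by ring, Real.rpow_one]
      have hρpos : (0:ℝ) < r^(2*ρ) := Real.rpow_pos_of_pos hr0 _
      calc 2*b*r = 2*b*(r^(1-2*ρ)*r^(2*ρ)) := by rw [h4]
        _ ≤ 2*b*((1/(2*b))*r^(2*ρ)) := by
            apply mul_le_mul_of_nonneg_left _ (by positivity)
            apply mul_le_mul_of_nonneg_right _ hρpos.le
            rw [h3] at h2; exact h2
        _ = r^(2*ρ) := by field_simp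
  refine ⟨ε, hεpos, hε1,
    fun r => ((1/2*(r^(2*ρ)+r^(2*θ)) - Real.sqrt ((1/2*(r^(2*ρ)+r^(2*θ)))^2 - b^2*r^2) : ℝ) : ℂ),
    fun r => ((1/2*(r^(2*ρ)+r^(2*θ)) - Real.sqrt ((1/2*(r^(2*ρ)+r^(2*θ)))^2 - a^2*r^2) : ℝ) : ℂ),
    fun r => ((1/2*(r^(2*ρ)+r^(2*θ)) + Real.sqrt ((1/2*(r^(2*ρ)+r^(2*θ)))^2 - b^2*r^2) : ℝ) : ℂ),
    fun r => ((1/2*(r^(2*ρ)+r^(2*θ)) + Real.sqrt ((1/2*(r^(2*ρ)+r^(2*θ)))^2 - a^2*r^2) : ℝ) : ℂ),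
    ?_, ?_, ?_, ?_, ?_⟩
  · -- roots
    intro r hr0 hrε
    obtain ⟨hr1, hrsb⟩ := hgood r hr0 hrε
    have hrsa : 2*a*r ≤ r^(2*ρ) := le_trans (by nlinarith [mul_pos hr0 (sub_pos.2 hab)]) hrsb
    set sR : ℝ := 1/2*(r^(2*ρ)+r^(2*θ)) with hsR
    have htb : 0 ≤ sR^2 - b^2*r^2 := tnn hb' hr0 hrsb
    have hta : 0 ≤ sR^2 - a^2*r^2 := tnn ha hr0 hrsa
    set qb := Real.sqrt (sR^2 - b^2*r^2) with hqb
    set qa := Real.sqrt (sR^2 - a^2*r^2) with hqa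
    have hqb2 : qb^2 = sR^2 - b^2*r^2 := Real.sq_sqrt htb
    have hqa2 : qa^2 = sR^2 - a^2*r^2 := Real.sq_sqrt hta
    have hBe : Bmat a b ρ θ r =
        !![(sR:ℂ) - (Complex.I*r)*(b:ℂ), 0, (sR:ℂ), 0;
           0, (sR:ℂ) - (Complex.I*r)*(a:ℂ), 0, (sR:ℂ);
           (sR:ℂ), 0, (sR:ℂ) + (Complex.I*r)*(b:ℂ), 0;
           0, (sR:ℂ), 0, (sR:ℂ) + (Complex.I*r)*(a:ℂ)] := by
      ext i j
      fin_cases i <;> fin_cases j <;>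
        (simp [Bmat, B0, B1, hsR, Matrix.vecHead, Matrix.vecTail]; try ring)
    rw [hBe, charpoly_aux]
    have hub : (C (Complex.I*(r:ℂ)))^2 * (C (b:ℂ))^2 = C (-((b^2*r^2 : ℝ):ℂ)) := by
      rw [← C_pow, ← C_pow, ← C_mul]
      congr 1
      push_cast
      linear_combination ((r:ℂ)^2*(b:ℂ)^2) * Complex.I_sq
    have hua : (C (Complex.I*(r:ℂ)))^2 * (C (a:ℂ))^2 = C (-((a^2*r^2 : ℝ):ℂ)) := by
      rw [← C_pow, ← C_pow, ← C_mul]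
      congr 1
      push_cast
      linear_combination ((r:ℂ)^2*(a:ℂ)^2) * Complex.I_sq
    rw [hub, hua, map_neg, map_neg, sub_neg_eq_add, sub_neg_eq_add]
    have hfb : X^2 - 2*C ((sR:ℝ):ℂ)*X + C ((b^2*r^2 : ℝ):ℂ)
        = (X - C ((sR - qb : ℝ):ℂ)) * (X - C ((sR + qb : ℝ):ℂ)) := by
      apply quad_factor
      · push_cast; ring
      · push_cast
        have : (qb:ℂ)^2 = ((sR:ℂ))^2 - (b:ℂ)^2*(r:ℂ)^2 := by
          have := hqb2; push_cast [← this]; norm_cast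
        linear_combination -this
    have hfa : X^2 - 2*C ((sR:ℝ):ℂ)*X + C ((a^2*r^2 : ℝ):ℂ)
        = (X - C ((sR - qa : ℝ):ℂ)) * (X - C ((sR + qa : ℝ):ℂ)) := by
      apply quad_factor
      · push_cast; ring
      · push_cast
        have : (qa:ℂ)^2 = ((sR:ℂ))^2 - (a:ℂ)^2*(r:ℂ)^2 := by
          have := hqa2; push_cast [← this]; norm_cast
        linear_combination -this
    rw [hfb, hfa]
    have hprod : (X - C ((sR - qb : ℝ):ℂ)) * (X - C ((sR + qb : ℝ):ℂ)) *
        ((X - C ((sR - qa : ℝ):ℂ)) * (X - C ((sR + qa : ℝ):ℂ)))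
        = (({((sR - qb : ℝ):ℂ), ((sR - qa : ℝ):ℂ), ((sR + qb : ℝ):ℂ), ((sR + qa : ℝ):ℂ)} :
            Multiset ℂ).map (fun z => X - C z)).prod := by
      simp only [Multiset.insert_eq_cons, Multiset.map_cons, Multiset.map_singleton,
        Multiset.prod_cons, Multiset.prod_singleton]
      ring
    rw [hprod, Polynomial.roots_multiset_prod_X_sub_C]
  all_goals {
    refine Asymptotics.IsBigO.of_bound (2*b^2+4*b^4) ?_
    filter_upwards [Ioo_mem_nhdsGT_of_mem (Set.mem_Ico.2 ⟨le_refl (0:ℝ), hεpos⟩)] with r hr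
    obtain ⟨hr0, hrε⟩ := hr
    obtain ⟨hr1, hrsb⟩ := hgood r hr0 hrε
    have hrsa : 2*a*r ≤ r^(2*ρ) :=
      le_trans (by nlinarith [mul_pos hr0 (sub_pos.2 hab)]) hrsb
    have hkb := key (b:=b) (ρ:=ρ) (θ:=θ) (r:=r) hb' (by linarith) (by linarith) hr0 hr1 hrsb
    have hka := key (b:=a) (ρ:=ρ) (θ:=θ) (r:=r) ha (by linarith) (by linarith) hr0 hr1 hrsa
    have hka' : |(1/2*(r^(2*ρ)+r^(2*θ)) - Real.sqrt ((1/2*(r^(2*ρ)+r^(2*θ)))^2 - a^2*r^2)) - a^2*r^(2-2*ρ)|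
        ≤ (2*b^2+4*b^4) * r^(1+2*θ-2*ρ) := by
      refine hka.trans ?_
      have hposr : (0:ℝ) < r^(1+2*θ-2*ρ) := Real.rpow_pos_of_pos hr0 _
      have h2 : a^2 ≤ b^2 := by nlinarith
      have h4 : a^4 ≤ b^4 := by
        calc a^4 = (a^2)^2 := by ring
          _ ≤ (b^2)^2 := pow_le_pow_left₀ (sq_nonneg a) h2 2
          _ = b^4 := by ring
      exact mul_le_mul_of_nonneg_right (by linarith) hposr.le
    have hnormr : ‖r ^ (1+2*θ-2*ρ)‖ = r^(1+2*θ-2*ρ) := by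
      rw [Real.norm_eq_abs, abs_of_pos (Real.rpow_pos_of_pos hr0 _)]
    simp only [hnormr]
    first
      | (rw [show ((1/2*(r^(2*ρ)+r^(2*θ)) - Real.sqrt ((1/2*(r^(2*ρ)+r^(2*θ)))^2 - b^2*r^2) : ℝ) : ℂ)
              - ((b^2 * r ^ (2 - 2*ρ) : ℝ) : ℂ)
            = (((1/2*(r^(2*ρ)+r^(2*θ)) - Real.sqrt ((1/2*(r^(2*ρ)+r^(2*θ)))^2 - b^2*r^2)) - b^2*r^(2-2*ρ) : ℝ) : ℂ)
            from by push_cast; ring, Complex.norm_real, Real.norm_eq_abs]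
         exact hkb)
      | (rw [show ((1/2*(r^(2*ρ)+r^(2*θ)) - Real.sqrt ((1/2*(r^(2*ρ)+r^(2*θ)))^2 - a^2*r^2) : ℝ) : ℂ)
              - ((a^2 * r ^ (2 - 2*ρ) : ℝ) : ℂ)
            = (((1/2*(r^(2*ρ)+r^(2*θ)) - Real.sqrt ((1/2*(r^(2*ρ)+r^(2*θ)))^2 - a^2*r^2)) - a^2*r^(2-2*ρ) : ℝ) : ℂ)
            from by push_cast; ring, Complex.norm_real, Real.norm_eq_abs]
         exact hka')
      | (rw [show ((1/2*(r^(2*ρ)+r^(2*θ)) + Real.sqrt ((1/2*(r^(2*ρ)+r^(2*θ)))^2 - b^2*r^2) : ℝ) : ℂ)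
              - ((r ^ (2*ρ) + r ^ (2*θ) - b^2 * r ^ (2 - 2*ρ) : ℝ) : ℂ)
            = (((Real.sqrt ((1/2*(r^(2*ρ)+r^(2*θ)))^2 - b^2*r^2) - (1/2*(r^(2*ρ)+r^(2*θ)))) + b^2*r^(2-2*ρ) : ℝ) : ℂ)
            from by push_cast; ring, Complex.norm_real, Real.norm_eq_abs,
            show (Real.sqrt ((1/2*(r^(2*ρ)+r^(2*θ)))^2 - b^2*r^2) - (1/2*(r^(2*ρ)+r^(2*θ)))) + b^2*r^(2-2*ρ)
              = -((1/2*(r^(2*ρ)+r^(2*θ)) - Real.sqrt ((1/2*(r^(2*ρ)+r^(2*θ)))^2 - b^2*r^2)) - b^2*r^(2-2*ρ)) from by ring,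
            abs_neg]
         exact hkb)
      | (rw [show ((1/2*(r^(2*ρ)+r^(2*θ)) + Real.sqrt ((1/2*(r^(2*ρ)+r^(2*θ)))^2 - a^2*r^2) : ℝ) : ℂ)
              - ((r ^ (2*ρ) + r ^ (2*θ) - a^2 * r ^ (2 - 2*ρ) : ℝ) : ℂ)
            = (((Real.sqrt ((1/2*(r^(2*ρ)+r^(2*θ)))^2 - a^2*r^2) - (1/2*(r^(2*ρ)+r^(2*θ)))) + a^2*r^(2-2*ρ) : ℝ) : ℂ)
            from by push_cast; ring, Complex.norm_real, Real.norm_eq_abs,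
            show (Real.sqrt ((1/2*(r^(2*ρ)+r^(2*θ)))^2 - a^2*r^2) - (1/2*(r^(2*ρ)+r^(2*θ)))) + a^2*r^(2-2*ρ)
              = -((1/2*(r^(2*ρ)+r^(2*θ)) - Real.sqrt ((1/2*(r^(2*ρ)+r^(2*θ)))^2 - a^2*r^2)) - a^2*r^(2-2*ρ)) from by ring,
            abs_neg]
         exact hka')
  }

end
end

section
/- (Small-frequency eigenvalue asymptotics, case ρ+θ = 1) Assume additionally ρ + θ = 1. Then there exist ε ∈ (0,1) and functions λ₁, λ₂, λ₃, λ₄ : (0,ε) → ℂ such that for every r ∈ (0,ε) the multiset of roots (with multiplicity) of the characteristic polynomial of B(r) is {λ₁(r), λ₂(r), λ₃(r), λ₄(r)}, and as r → 0⁺: λ₁(r) − b²r^{2−2ρ} = O(r^{3−4ρ}), λ₂(r) − a²r^{2−2ρ} = O(r^{3−4ρ}), λ₃(r) − (r^{2ρ} + (1−b²)r^{2−2ρ}) = O(r^{3−4ρ}), and λ₄(r) − (r^{2ρ} + (1−a²)r^{2−2ρ}) = O(r^{3−4ρ}). -/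
noncomputable section

open Asymptotics Filter Topology Polynomial

namespace Stmt5Aux

lemma charpoly_struct (s α β : ℂ) :
    (Matrix.charpoly !![s-α,0,s,0; 0,s-β,0,s; s,0,s+α,0; 0,s,0,s+β]) =
    (X^2 - C (2*s) * X + C (-α^2)) * (X^2 - C (2*s)*X + C (-β^2)) := by
  rw [Matrix.charpoly]
  simp [Matrix.det_succ_row_zero, Fin.sum_univ_succ,
    Matrix.charmatrix_apply, Matrix.one_apply, Matrix.diagonal_apply, Fin.succAbove, C_ofNat]
  ring

lemma Bmat_eq (a b ρ θ r : ℝ) :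
    Bmat a b ρ θ r =
      !![(((1/2) * (r ^ (2*ρ) + r ^ (2*θ)) : ℝ) : ℂ) - Complex.I * r * b, 0,
          (((1/2) * (r ^ (2*ρ) + r ^ (2*θ)) : ℝ) : ℂ), 0;
        0, (((1/2) * (r ^ (2*ρ) + r ^ (2*θ)) : ℝ) : ℂ) - Complex.I * r * a, 0,
          (((1/2) * (r ^ (2*ρ) + r ^ (2*θ)) : ℝ) : ℂ);
        (((1/2) * (r ^ (2*ρ) + r ^ (2*θ)) : ℝ) : ℂ), 0,
          (((1/2) * (r ^ (2*ρ) + r ^ (2*θ)) : ℝ) : ℂ) + Complex.I * r * b, 0;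
        0, (((1/2) * (r ^ (2*ρ) + r ^ (2*θ)) : ℝ) : ℂ), 0,
          (((1/2) * (r ^ (2*ρ) + r ^ (2*θ)) : ℝ) : ℂ) + Complex.I * r * a] := by
  ext i j
  fin_cases i <;> fin_cases j <;>
    simp [Bmat, B0, B1, Matrix.vecHead, Matrix.vecTail] <;> ring

lemma factor_quad (m k p q : ℂ) (h1 : p + q = m) (h2 : p * q = k) :
    X^2 - C m * X + C k = (X - C p) * (X - C q) := by
  subst h1 h2
  simp only [map_add, map_mul]
  ring

lemma roots4 (p q r s : ℂ) :
    ((X - C p) * ((X - C q) * ((X - C r) * (X - C s)))).roots = {p, q, r, s} := by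
  rw [roots_mul (mul_ne_zero (X_sub_C_ne_zero p) (mul_ne_zero (X_sub_C_ne_zero q)
      (mul_ne_zero (X_sub_C_ne_zero r) (X_sub_C_ne_zero s)))),
    roots_mul (mul_ne_zero (X_sub_C_ne_zero q)
      (mul_ne_zero (X_sub_C_ne_zero r) (X_sub_C_ne_zero s))),
    roots_mul (mul_ne_zero (X_sub_C_ne_zero r) (X_sub_C_ne_zero s)),
    roots_X_sub_C, roots_X_sub_C, roots_X_sub_C, roots_X_sub_C,
    Multiset.singleton_add, Multiset.singleton_add, Multiset.singleton_add]
  rfl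

lemma ct_lb (c t : ℝ) (ht0 : 0 ≤ t) (hct : |c| * t ≤ 1/4) : -(1/4) ≤ c * t := by
  have h : |c*t| = |c| * t := by rw [abs_mul, abs_of_nonneg ht0]
  have := neg_abs_le (c*t)
  linarith

lemma D_nonneg (c t : ℝ) (ht0 : 0 ≤ t) (hct : |c| * t ≤ 1/4) :
    0 ≤ 1 + 2*c*t + t^2 := by
  have := ct_lb c t ht0 hct
  nlinarith [sq_nonneg t]

lemma sqrt_bound (c t : ℝ) (ht0 : 0 ≤ t) (hct : |c| * t ≤ 1/4) :
    |1 + c*t - Real.sqrt (1 + 2*c*t + t^2)| ≤ 2*(c^2+1) * t^2 := by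
  have hD := D_nonneg c t ht0 hct
  set y := Real.sqrt (1 + 2*c*t + t^2) with hy
  have hy2 : y^2 = 1 + 2*c*t + t^2 := Real.sq_sqrt hD
  have hy0 : 0 ≤ y := Real.sqrt_nonneg _
  have hct' := ct_lb c t ht0 hct
  have hprod : (1 + c*t - y) * (1 + c*t + y) = (c^2 - 1) * t^2 := by
    linear_combination -hy2
  have hden : 3/4 ≤ 1 + c*t + y := by linarith
  rw [abs_le]
  constructor <;> nlinarith [sq_nonneg t, sq_nonneg c, mul_nonneg (sq_nonneg c) (sq_nonneg t)]

/-- The key real estimates. -/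
lemma real_key (w ρ r : ℝ) (hρ0 : 0 ≤ ρ) (hρ : ρ < 1/2) (hr0 : 0 < r) (hr1 : r ≤ 1)
    (hct : |1-2*w| * r ^ (2-4*ρ) ≤ 1/4) :
    0 ≤ ((1/2) * (r ^ (2*ρ) + r ^ (2-2*ρ)))^2 - w*r^2 ∧
    |(1/2) * (r ^ (2*ρ) + r ^ (2-2*ρ))
        - Real.sqrt (((1/2) * (r ^ (2*ρ) + r ^ (2-2*ρ)))^2 - w*r^2)
        - w * r ^ (2-2*ρ)| ≤ 2*((1-2*w)^2+1) * r ^ (3-4*ρ) ∧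
    |(1/2) * (r ^ (2*ρ) + r ^ (2-2*ρ))
        + Real.sqrt (((1/2) * (r ^ (2*ρ) + r ^ (2-2*ρ)))^2 - w*r^2)
        - (r ^ (2*ρ) + (1-w) * r ^ (2-2*ρ))| ≤ 2*((1-2*w)^2+1) * r ^ (3-4*ρ) := by
  set u := r ^ (2*ρ) with hu'
  set t := r ^ (2-4*ρ) with ht'
  set c := 1-2*w with hc'
  have hu : 0 < u := Real.rpow_pos_of_pos hr0 _
  have ht0 : 0 < t := Real.rpow_pos_of_pos hr0 _
  have hv : r ^ (2-2*ρ) = u * t := by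
    rw [hu', ht', ← Real.rpow_add hr0]; congr 1; ring
  have hr2 : r ^ (2:ℕ) = u * (u * t) := by
    rw [hu', ht', ← Real.rpow_add hr0, ← Real.rpow_add hr0,
      show 2*ρ + (2*ρ + (2-4*ρ)) = ((2:ℕ):ℝ) by push_cast; ring, Real.rpow_natCast]
  have hD := D_nonneg c t ht0.le hct
  have hA : ((1/2) * (u + u*t))^2 - w*(u*(u*t)) = (u/2)^2 * (1+2*c*t+t^2) := by
    rw [hc']; ring
  have hA0 : 0 ≤ ((1/2) * (u + r ^ (2-2*ρ)))^2 - w*r^2 := by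
    rw [hv, hr2, hA]; exact mul_nonneg (sq_nonneg _) hD
  have key : |1 + c*t - Real.sqrt (1+2*c*t+t^2)| ≤ 2*(c^2+1) * t^2 :=
    sqrt_bound c t ht0.le hct
  have hut2 : u * t^2 ≤ r ^ (3-4*ρ) := by
    have h1 : u * t^2 = r ^ (3-4*ρ) * r ^ (1-2*ρ) := by
      rw [hu', ht', pow_two, ← Real.rpow_add hr0, ← Real.rpow_add hr0,
        ← Real.rpow_add hr0]
      congr 1; ring
    have h2 : r ^ (1-2*ρ) ≤ 1 := Real.rpow_le_one hr0.le hr1 (by linarith)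
    have h3 : 0 < r ^ (3-4*ρ) := Real.rpow_pos_of_pos hr0 _
    nlinarith
  have habs : ∀ z : ℝ, |(u/2) * z| = (u/2) * |z| := fun z => by
    rw [abs_mul, abs_of_nonneg (by positivity : (0:ℝ) ≤ u/2)]
  have hbig : (u/2) * |1 + c*t - Real.sqrt (1+2*c*t+t^2)| ≤ 2*(c^2+1) * r ^ (3-4*ρ) := by
    calc (u/2) * |1 + c*t - Real.sqrt (1+2*c*t+t^2)|
        ≤ (u/2) * (2*(c^2+1) * t^2) := mul_le_mul_of_nonneg_left key (by positivity)
      _ = (c^2+1) * (u * t^2) := by ring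
      _ ≤ 2*(c^2+1) * r ^ (3-4*ρ) := by
          nlinarith [mul_le_mul_of_nonneg_left hut2 (by positivity : (0:ℝ) ≤ c^2+1),
            mul_nonneg (by positivity : (0:ℝ) ≤ c^2+1) (Real.rpow_nonneg hr0.le (3-4*ρ))]
  refine ⟨hA0, ?_, ?_⟩
  · rw [hv, hr2, hA, Real.sqrt_mul (sq_nonneg _), Real.sqrt_sq (by positivity : (0:ℝ) ≤ u/2)]
    have e : (1/2)*(u+u*t) - u/2 * Real.sqrt (1+2*c*t+t^2) - w*(u*t)
        = (u/2) * (1 + c*t - Real.sqrt (1+2*c*t+t^2)) := by rw [hc']; ring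
    rw [e, habs]
    exact hbig
  · rw [hv, hr2, hA, Real.sqrt_mul (sq_nonneg _), Real.sqrt_sq (by positivity : (0:ℝ) ≤ u/2)]
    have e : (1/2)*(u+u*t) + u/2 * Real.sqrt (1+2*c*t+t^2) - (u + (1-w)*(u*t))
        = -((u/2) * (1 + c*t - Real.sqrt (1+2*c*t+t^2))) := by rw [hc']; ring
    rw [e, abs_neg, habs]
    exact hbig

end Stmt5Aux

open Stmt5Aux

set_option maxHeartbeats 1000000 in
/-- Small-frequency eigenvalue asymptotics in the case `ρ + θ = 1`. -/
theorem stmt5 (a b ρ θ : ℝ) (ha : 0 < a) (hab : a < b)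
    (hρ0 : 0 ≤ ρ) (hρ : ρ < 1/2) (hθ : 1/2 < θ) (hθ1 : θ ≤ 1)
    (hsum : ρ + θ = 1) :
    ∃ ε : ℝ, 0 < ε ∧ ε < 1 ∧ ∃ l₁ l₂ l₃ l₄ : ℝ → ℂ,
      (∀ r : ℝ, 0 < r → r < ε →
        (Bmat a b ρ θ r).charpoly.roots = {l₁ r, l₂ r, l₃ r, l₄ r}) ∧
      (fun r : ℝ => l₁ r - ((b^2 * r ^ (2 - 2*ρ) : ℝ) : ℂ))
        =O[𝓝[>] (0:ℝ)] (fun r : ℝ => r ^ (3 - 4*ρ)) ∧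
      (fun r : ℝ => l₂ r - ((a^2 * r ^ (2 - 2*ρ) : ℝ) : ℂ))
        =O[𝓝[>] (0:ℝ)] (fun r : ℝ => r ^ (3 - 4*ρ)) ∧
      (fun r : ℝ => l₃ r - ((r ^ (2*ρ) + (1 - b^2) * r ^ (2 - 2*ρ) : ℝ) : ℂ))
        =O[𝓝[>] (0:ℝ)] (fun r : ℝ => r ^ (3 - 4*ρ)) ∧
      (fun r : ℝ => l₄ r - ((r ^ (2*ρ) + (1 - a^2) * r ^ (2 - 2*ρ) : ℝ) : ℂ))
        =O[𝓝[>] (0:ℝ)] (fun r : ℝ => r ^ (3 - 4*ρ)) := by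
  have hθ2 : 2*θ = 2-2*ρ := by linarith
  set C0 : ℝ := 1 + 2*b^2 with hC0
  have hb0 : 0 < b := ha.trans hab
  have hC0pos : 0 < C0 := by positivity
  have hb2 : |1-2*b^2| ≤ C0 := abs_le.mpr ⟨by nlinarith, by nlinarith⟩
  have ha2 : |1-2*a^2| ≤ C0 := abs_le.mpr ⟨by nlinarith, by nlinarith⟩
  set p : ℝ := 2-4*ρ with hp'
  have hp : 0 < p := by rw [hp']; linarith
  set ε : ℝ := min (1/2) ((1/(4*C0)) ^ (1/p)) with hε'
  have hε0 : 0 < ε := lt_min (by norm_num) (Real.rpow_pos_of_pos (by positivity) _)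
  have hε1 : ε < 1 := lt_of_le_of_lt (min_le_left _ _) (by norm_num)
  have hkey : ∀ r : ℝ, 0 < r → r < ε → ∀ c : ℝ, |c| ≤ C0 → |c| * r ^ p ≤ 1/4 := by
    intro r hr0 hrε c hc
    have h1 : r ^ p < ε ^ p := Real.rpow_lt_rpow hr0.le hrε hp
    have h2 : ε ^ p ≤ ((1/(4*C0)) ^ (1/p)) ^ p :=
      Real.rpow_le_rpow hε0.le (min_le_right _ _) hp.le
    have h3 : ((1/(4*C0)) ^ (1/p)) ^ p = 1/(4*C0) := by
      rw [← Real.rpow_mul (by positivity), one_div_mul_cancel hp.ne', Real.rpow_one]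
    have h4 : r ^ p ≤ 1/(4*C0) := by rw [← h3]; exact h1.le.trans h2
    calc |c| * r ^ p ≤ C0 * (1/(4*C0)) := by
          exact mul_le_mul hc h4 (Real.rpow_nonneg hr0.le _) hC0pos.le
      _ = 1/4 := by field_simp
  refine ⟨ε, hε0, hε1,
    (fun r => (((1/2) * (r ^ (2*ρ) + r ^ (2-2*ρ))
        - Real.sqrt (((1/2) * (r ^ (2*ρ) + r ^ (2-2*ρ)))^2 - b^2*r^2) : ℝ) : ℂ)),
    (fun r => (((1/2) * (r ^ (2*ρ) + r ^ (2-2*ρ))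
        - Real.sqrt (((1/2) * (r ^ (2*ρ) + r ^ (2-2*ρ)))^2 - a^2*r^2) : ℝ) : ℂ)),
    (fun r => (((1/2) * (r ^ (2*ρ) + r ^ (2-2*ρ))
        + Real.sqrt (((1/2) * (r ^ (2*ρ) + r ^ (2-2*ρ)))^2 - b^2*r^2) : ℝ) : ℂ)),
    (fun r => (((1/2) * (r ^ (2*ρ) + r ^ (2-2*ρ))
        + Real.sqrt (((1/2) * (r ^ (2*ρ) + r ^ (2-2*ρ)))^2 - a^2*r^2) : ℝ) : ℂ)),
    ?_, ?_, ?_, ?_, ?_⟩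
  · -- roots
    intro r hr0 hrε
    have hr1 : r ≤ 1 := (hrε.trans hε1).le
    have hctb : |1-2*b^2| * r ^ (2-4*ρ) ≤ 1/4 := hkey r hr0 hrε _ hb2
    have hcta : |1-2*a^2| * r ^ (2-4*ρ) ≤ 1/4 := hkey r hr0 hrε _ ha2
    obtain ⟨hAb0, -, -⟩ := real_key (b^2) ρ r hρ0 hρ hr0 hr1 hctb
    obtain ⟨hAa0, -, -⟩ := real_key (a^2) ρ r hρ0 hρ hr0 hr1 hcta
    set sR : ℝ := (1/2) * (r ^ (2*ρ) + r ^ (2-2*ρ)) with hsR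
    set Qb : ℝ := Real.sqrt (sR^2 - b^2*r^2) with hQb
    set Qa : ℝ := Real.sqrt (sR^2 - a^2*r^2) with hQa
    have hQb2 : Qb^2 = sR^2 - b^2*r^2 := Real.sq_sqrt hAb0
    have hQa2 : Qa^2 = sR^2 - a^2*r^2 := Real.sq_sqrt hAa0
    rw [Bmat_eq]
    simp only [hθ2]
    rw [charpoly_struct]
    have hα : -(Complex.I * (r:ℂ) * (b:ℂ))^2 = ((b^2*r^2 : ℝ) : ℂ) := by
      push_cast
      rw [mul_pow, mul_pow, Complex.I_sq]
      ring
    have hβ : -(Complex.I * (r:ℂ) * (a:ℂ))^2 = ((a^2*r^2 : ℝ) : ℂ) := by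
      push_cast
      rw [mul_pow, mul_pow, Complex.I_sq]
      ring
    rw [hα, hβ]
    have hfb : X^2 - C (2*((sR:ℝ):ℂ)) * X + C (((b^2*r^2:ℝ):ℂ))
        = (X - C (((sR - Qb : ℝ):ℂ))) * (X - C (((sR + Qb : ℝ):ℂ))) := by
      refine factor_quad _ _ _ _ (by push_cast; ring) ?_
      have hre : (sR - Qb) * (sR + Qb) = b^2*r^2 := by nlinarith [hQb2]
      push_cast [← hre]
      ring
    have hfa : X^2 - C (2*((sR:ℝ):ℂ)) * X + C (((a^2*r^2:ℝ):ℂ))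
        = (X - C (((sR - Qa : ℝ):ℂ))) * (X - C (((sR + Qa : ℝ):ℂ))) := by
      refine factor_quad _ _ _ _ (by push_cast; ring) ?_
      have hre : (sR - Qa) * (sR + Qa) = a^2*r^2 := by nlinarith [hQa2]
      push_cast [← hre]
      ring
    rw [hfb, hfa,
      show ∀ P Q R S : Polynomial ℂ, (P*R)*(Q*S) = P*(Q*(R*S)) from fun P Q R S => by ring]
    exact roots4 _ _ _ _
  all_goals {
    rw [isBigO_iff]
    refine ⟨2*((1-2*b^2)^2+1) + 2*((1-2*a^2)^2+1), ?_⟩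
    filter_upwards [Ioo_mem_nhdsGT hε0] with r hr
    obtain ⟨hr0, hrε⟩ := hr
    have hr1 : r ≤ 1 := (hrε.trans hε1).le
    have hctb : |1-2*b^2| * r ^ (2-4*ρ) ≤ 1/4 := hkey r hr0 hrε _ hb2
    have hcta : |1-2*a^2| * r ^ (2-4*ρ) ≤ 1/4 := hkey r hr0 hrε _ ha2
    obtain ⟨hAb0, hb_m, hb_p⟩ := real_key (b^2) ρ r hρ0 hρ hr0 hr1 hctb
    obtain ⟨hAa0, ha_m, ha_p⟩ := real_key (a^2) ρ r hρ0 hρ hr0 hr1 hcta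
    have hpos : (0:ℝ) ≤ r ^ (3-4*ρ) := Real.rpow_nonneg hr0.le _
    have hposb : (0:ℝ) ≤ 2*((1-2*b^2)^2+1) * r ^ (3-4*ρ) := by positivity
    have hposa : (0:ℝ) ≤ 2*((1-2*a^2)^2+1) * r ^ (3-4*ρ) := by positivity
    rw [← Complex.ofReal_sub, Complex.norm_real, Real.norm_eq_abs, Real.norm_eq_abs,
      abs_of_nonneg hpos]
    linarith [hb_m, hb_p, ha_m, ha_p] }

end
end

section
/- (Small-frequency eigenvalue asymptotics, case ρ+θ > 1) Assume additionally ρ + θ > 1. Then there exist ε ∈ (0,1) and functions λ₁, λ₂, λ₃, λ₄ : (0,ε) → ℂ such that for every r ∈ (0,ε) the multiset of roots (with multiplicity) of the characteristic polynomial of B(r) is {λ₁(r), λ₂(r), λ₃(r), λ₄(r)}, and as r → 0⁺: λ₁(r) − b²r^{2−2ρ} = O(r^{m}), λ₂(r) − a²r^{2−2ρ} = O(r^{m}), λ₃(r) − (r^{2ρ} − b²r^{2−2ρ}) = O(r^{m}), and λ₄(r) − (r^{2ρ} − a²r^{2−2ρ}) = O(r^{m}), where m := min(3−4ρ, 2θ).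 -/
noncomputable section

open Asymptotics Filter Topology Polynomial

def sf (ρ θ r : ℝ) : ℝ := (1/2) * (r ^ (2*ρ) + r ^ (2*θ))
def Dd (c ρ θ r : ℝ) : ℝ := Real.sqrt ((sf ρ θ r)^2 - c^2*r^2)

theorem det4aux {R : Type*} [CommRing R] (m : Matrix (Fin 4) (Fin 4) R) :
    m.det = m 0 0 * (m 1 1 * (m 2 2 * m 3 3 - m 2 3 * m 3 2)
                - m 1 2 * (m 2 1 * m 3 3 - m 2 3 * m 3 1)
                + m 1 3 * (m 2 1 * m 3 2 - m 2 2 * m 3 1))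
      - m 0 1 * (m 1 0 * (m 2 2 * m 3 3 - m 2 3 * m 3 2)
                - m 1 2 * (m 2 0 * m 3 3 - m 2 3 * m 3 0)
                + m 1 3 * (m 2 0 * m 3 2 - m 2 2 * m 3 0))
      + m 0 2 * (m 1 0 * (m 2 1 * m 3 3 - m 2 3 * m 3 1)
                - m 1 1 * (m 2 0 * m 3 3 - m 2 3 * m 3 0)
                + m 1 3 * (m 2 0 * m 3 1 - m 2 1 * m 3 0))
      - m 0 3 * (m 1 0 * (m 2 1 * m 3 2 - m 2 2 * m 3 1)
                - m 1 1 * (m 2 0 * m 3 2 - m 2 2 * m 3 0)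
                + m 1 2 * (m 2 0 * m 3 1 - m 2 1 * m 3 0)) := by
  simp [Matrix.det_succ_row_zero, Fin.sum_univ_succ, Fin.succAbove, Matrix.submatrix_apply,
    show (Fin.succ 2 : Fin 4) = 3 from rfl, show (Fin.succ 1 : Fin 4) = 2 from rfl,
    show (Fin.succ 0 : Fin 4) = 1 from rfl, show (Fin.castSucc 2 : Fin 4) = 2 from rfl,
    show (Fin.castSucc 1 : Fin 4) = 1 from rfl, show (Fin.castSucc 0 : Fin 4) = 0 from rfl]
  ring

set_option maxHeartbeats 1000000 in
theorem charpoly_Bmat (a b ρ θ r : ℝ) (s : ℝ) (hs : ((1/2) * (r ^ (2*ρ) + r ^ (2*θ)) : ℝ) = s)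
    (Da Db : ℝ) (hDa : (Da:ℂ)^2 = (s:ℂ)^2 - a^2*r^2) (hDb : (Db:ℂ)^2 = (s:ℂ)^2 - b^2*r^2) :
    (Bmat a b ρ θ r).charpoly =
      (((X - C ((s:ℂ) - Db)) * (X - C ((s:ℂ) + Db))) *
       ((X - C ((s:ℂ) - Da)) * (X - C ((s:ℂ) + Da)))) := by
  have hI : (C Complex.I : ℂ[X])^2 = -1 := by
    rw [← map_pow, Complex.I_sq, map_neg, map_one]
  have hDa' : (C (Da:ℂ) : ℂ[X])^2 = C ((s:ℝ):ℂ)^2 - C ((a:ℝ):ℂ)^2 * C ((r:ℝ):ℂ)^2 := by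
    rw [← map_pow, hDa]; push_cast [map_sub, map_mul, map_pow]; ring
  have hDb' : (C (Db:ℂ) : ℂ[X])^2 = C ((s:ℝ):ℂ)^2 - C ((b:ℝ):ℂ)^2 * C ((r:ℝ):ℂ)^2 := by
    rw [← map_pow, hDb]; push_cast [map_sub, map_mul, map_pow]; ring
  rw [Matrix.charpoly, det4aux]
  simp only [Matrix.charmatrix_apply, Bmat, B0, B1, Matrix.smul_apply, Matrix.add_apply, hs]
  simp [Matrix.diagonal_apply, Matrix.vecHead, Matrix.vecTail, Function.comp]
  linear_combination (norm := ring1)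
    ((X - C ((s:ℝ):ℂ))^2 - (C Complex.I)^2*(C ((r:ℝ):ℂ))^2*(C ((b:ℝ):ℂ))^2 - (C ((s:ℝ):ℂ))^2) * hDa'
    - ((X - C ((s:ℝ):ℂ))^2 - (C Complex.I)^2*(C ((r:ℝ):ℂ))^2*(C ((b:ℝ):ℂ))^2 - (C ((s:ℝ):ℂ))^2) * (C ((a:ℝ):ℂ))^2*(C ((r:ℝ):ℂ))^2 * hI
    + ((X - C ((s:ℝ):ℂ) + C (Da:ℂ)) * (X - C ((s:ℝ):ℂ) - C (Da:ℂ))) * hDb'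
    - ((X - C ((s:ℝ):ℂ) + C (Da:ℂ)) * (X - C ((s:ℝ):ℂ) - C (Da:ℂ))) * (C ((b:ℝ):ℂ))^2*(C ((r:ℝ):ℂ))^2 * hI

theorem roots_four (u v w z : ℂ) :
    (((X - C u) * (X - C w)) * ((X - C v) * (X - C z))).roots = {u, v, w, z} := by
  have h : ((X - C u) * (X - C w)) * ((X - C v) * (X - C z))
      = (({u, v, w, z} : Multiset ℂ).map fun x => X - C x).prod := by
    simp only [Multiset.insert_eq_cons, Multiset.map_cons, Multiset.prod_cons,
      Multiset.map_singleton, Multiset.prod_singleton]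
    ring
  rw [h, roots_multiset_prod_X_sub_C]

set_option maxHeartbeats 1000000 in
theorem est_small (c ρ θ r : ℝ) (hc : 0 < c) (hρ : ρ < 1/2) (hθ : 1/2 < θ)
    (hr : 0 < r) (hr1 : r < 1) (hcr : c * r ≤ r ^ (2*ρ) / 2) :
    |sf ρ θ r - Dd c ρ θ r - c^2 * r ^ (2 - 2*ρ)| ≤
      (4*c^4 + 2*c^2) * r ^ (min (3 - 4*ρ) (2*θ)) := by
  set t := r ^ (2*ρ) with htdef
  set u := r ^ (2*θ) with hudef
  have ht : 0 < t := Real.rpow_pos_of_pos hr _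
  have hu : 0 < u := Real.rpow_pos_of_pos hr _
  have hs : sf ρ θ r = (t+u)/2 := by rw [sf]; ring
  set s := sf ρ θ r with hsdef
  have hts : t/2 ≤ s := by rw [hs]; linarith
  have hsum2 : t + u = 2*s := by rw [hs]; ring
  set P := c^2*r^2 with hPdef
  have hP : (0:ℝ) < P := by positivity
  have hcr' : c*r ≤ s := le_trans hcr (by linarith)
  have hPs : P ≤ s^2 := by nlinarith [mul_pos hc hr]
  have hD2 : (Dd c ρ θ r)^2 = s^2 - P := Real.sq_sqrt (by linarith)
  have hD0 : 0 ≤ Dd c ρ θ r := Real.sqrt_nonneg _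
  set D := Dd c ρ θ r with hDdef
  have hs0 : 0 < s := lt_of_lt_of_le (by linarith) hts
  have hDs : D ≤ s := by nlinarith
  have hl0 : 0 ≤ s - D := by linarith
  have h1 : (s - D)*(s+D) = P := by linear_combination -hD2
  have hll : (s - D) * t ≤ 2*P := by nlinarith
  have hE : ((s - D)*t - P) * (s+D) = P * ((s-D) - u) := by
    linear_combination t*h1 + P*hsum2
  have hpow : c^2 * r ^ (2 - 2*ρ) = P/t := by
    rw [hPdef, htdef, Real.rpow_sub hr]
    norm_num [Real.rpow_two]
    ring
  rw [hpow]
  set E := s - D - P/t with hEdef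
  have hEeq : E * (t*(s+D)) = P * ((s-D) - u) := by
    rw [hEdef, ← hE]
    have hPt : P / t * t = P := div_mul_cancel₀ P ht.ne'
    linear_combination (-(s+D)) * hPt
  have hden : t^2/2 ≤ t*(s+D) := by nlinarith
  have habs1 : |E| * (t*(s+D)) = P * |s - D - u| := by
    rw [show |E| * (t*(s+D)) = |E * (t*(s+D))| by
          rw [abs_mul, abs_of_pos (by positivity : (0:ℝ) < t*(s+D))],
        hEeq, abs_mul, abs_of_pos hP]
  have habs2 : |s - D - u| ≤ (s - D) + u := abs_le.2 ⟨by linarith, by linarith⟩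
  have hsd : s - D ≤ 2*P/t := (le_div_iff₀ ht).2 (by linarith)
  have hb2 : |E| * (t^2/2) ≤ P*(2*P/t + u) := by
    calc |E| * (t^2/2) ≤ |E| * (t*(s+D)) :=
          mul_le_mul_of_nonneg_left hden (abs_nonneg _)
      _ = P * |s - D - u| := habs1
      _ ≤ P * ((s-D) + u) := mul_le_mul_of_nonneg_left habs2 hP.le
      _ ≤ P*(2*P/t + u) := mul_le_mul_of_nonneg_left (by linarith) hP.le
  have hb3 : |E| ≤ 4*(P^2/t^3) + 2*(P*u/t^2) := by
    rw [← mul_le_mul_iff_of_pos_right (by positivity : (0:ℝ) < t^2/2)]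
    refine le_trans hb2 (le_of_eq ?_)
    field_simp
    ring
  have h63 : t^3 = r ^ (6*ρ) := by
    rw [htdef, ← Real.rpow_natCast (r ^ (2*ρ)) 3, ← Real.rpow_mul hr.le]
    norm_num; ring_nf
  have h42 : t^2 = r ^ (4*ρ) := by
    rw [htdef, ← Real.rpow_natCast (r ^ (2*ρ)) 2, ← Real.rpow_mul hr.le]
    norm_num; ring_nf
  have e1 : P^2/t^3 = c^4 * r ^ ((4:ℝ) - 6*ρ) := by
    rw [hPdef, h63, Real.rpow_sub hr, show r ^ ((4:ℝ)) = r^4 by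
      rw [← Real.rpow_natCast r 4]; norm_num]
    ring
  have e2 : P*u/t^2 = c^2 * r ^ ((2:ℝ) + 2*θ - 4*ρ) := by
    rw [hPdef, hudef, h42, Real.rpow_sub hr, Real.rpow_add hr, show r ^ ((2:ℝ)) = r^2 by
      rw [← Real.rpow_natCast r 2]; norm_num]
    ring
  set m := min (3 - 4*ρ) (2*θ) with hm
  have key1 : r ^ ((4:ℝ) - 6*ρ) ≤ r ^ m :=
    Real.rpow_le_rpow_of_exponent_ge hr hr1.le
      (le_trans (min_le_left _ _) (by linarith))
  have key2 : r ^ ((2:ℝ) + 2*θ - 4*ρ) ≤ r ^ m :=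
    Real.rpow_le_rpow_of_exponent_ge hr hr1.le
      (le_trans (min_le_left _ _) (by linarith))
  calc |E| ≤ 4*(P^2/t^3) + 2*(P*u/t^2) := hb3
    _ = 4*c^4 * r ^ ((4:ℝ) - 6*ρ) + 2*c^2 * r ^ ((2:ℝ) + 2*θ - 4*ρ) := by
        rw [e1, e2]; ring
    _ ≤ 4*c^4 * r ^ m + 2*c^2 * r ^ m := by
        have h4 : (0:ℝ) ≤ 4*c^4 := by positivity
        have h2 : (0:ℝ) ≤ 2*c^2 := by positivity
        have := mul_le_mul_of_nonneg_left key1 h4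
        have := mul_le_mul_of_nonneg_left key2 h2
        linarith
    _ = (4*c^4 + 2*c^2) * r ^ m := by ring

theorem est_big (c ρ θ r : ℝ) (hc : 0 < c) (hρ : ρ < 1/2) (hθ : 1/2 < θ)
    (hr : 0 < r) (hr1 : r < 1) (hcr : c * r ≤ r ^ (2*ρ) / 2) :
    |sf ρ θ r + Dd c ρ θ r - (r ^ (2*ρ) - c^2 * r ^ (2 - 2*ρ))| ≤
      (1 + (4*c^4 + 2*c^2)) * r ^ (min (3 - 4*ρ) (2*θ)) := by
  have h1 := est_small c ρ θ r hc hρ hθ hr hr1 hcr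
  set x := sf ρ θ r - Dd c ρ θ r - c^2 * r ^ (2 - 2*ρ) with hx
  have hid : sf ρ θ r + Dd c ρ θ r - (r ^ (2*ρ) - c^2 * r ^ (2 - 2*ρ))
      = r ^ (2*θ) - x := by rw [hx, sf]; ring
  rw [hid]
  have hu : 0 < r ^ (2*θ) := Real.rpow_pos_of_pos hr _
  have hum : r ^ (2*θ) ≤ r ^ (min (3 - 4*ρ) (2*θ)) :=
    Real.rpow_le_rpow_of_exponent_ge hr hr1.le (min_le_right _ _)
  have h2 : |r ^ (2*θ) - x| ≤ r ^ (2*θ) + |x| :=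
    abs_le.2 ⟨by linarith [le_abs_self x, neg_abs_le x], by linarith [le_abs_self x, neg_abs_le x]⟩
  calc |r ^ (2*θ) - x| ≤ r ^ (2*θ) + |x| := h2
    _ ≤ r ^ (min (3 - 4*ρ) (2*θ)) + (4*c^4 + 2*c^2) * r ^ (min (3 - 4*ρ) (2*θ)) := by
        linarith
    _ = (1 + (4*c^4 + 2*c^2)) * r ^ (min (3 - 4*ρ) (2*θ)) := by ring

/-- Small-frequency eigenvalue asymptotics in the case `ρ + θ > 1`,
with remainder exponent `m = min(3−4ρ, 2θ)`. -/
theorem stmt6 (a b ρ θ : ℝ) (ha : 0 < a) (hab : a < b)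
    (hρ0 : 0 ≤ ρ) (hρ : ρ < 1/2) (hθ : 1/2 < θ) (hθ1 : θ ≤ 1)
    (hsum : 1 < ρ + θ) :
    ∃ ε : ℝ, 0 < ε ∧ ε < 1 ∧ ∃ l₁ l₂ l₃ l₄ : ℝ → ℂ,
      (∀ r : ℝ, 0 < r → r < ε →
        (Bmat a b ρ θ r).charpoly.roots = {l₁ r, l₂ r, l₃ r, l₄ r}) ∧
      (fun r : ℝ => l₁ r - ((b^2 * r ^ (2 - 2*ρ) : ℝ) : ℂ))
        =O[𝓝[>] (0:ℝ)] (fun r : ℝ => r ^ (min (3 - 4*ρ) (2*θ))) ∧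
      (fun r : ℝ => l₂ r - ((a^2 * r ^ (2 - 2*ρ) : ℝ) : ℂ))
        =O[𝓝[>] (0:ℝ)] (fun r : ℝ => r ^ (min (3 - 4*ρ) (2*θ))) ∧
      (fun r : ℝ => l₃ r - ((r ^ (2*ρ) - b^2 * r ^ (2 - 2*ρ) : ℝ) : ℂ))
        =O[𝓝[>] (0:ℝ)] (fun r : ℝ => r ^ (min (3 - 4*ρ) (2*θ))) ∧
      (fun r : ℝ => l₄ r - ((r ^ (2*ρ) - a^2 * r ^ (2 - 2*ρ) : ℝ) : ℂ))
        =O[𝓝[>] (0:ℝ)] (fun r : ℝ => r ^ (min (3 - 4*ρ) (2*θ))) := by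
  have hb : 0 < b := ha.trans hab
  have he : (0:ℝ) < 1 - 2*ρ := by linarith
  set ε : ℝ := min (1/2) ((2*b)⁻¹ ^ (1/(1-2*ρ))) with hε
  have hc0 : (0:ℝ) < (2*b)⁻¹ ^ (1/(1-2*ρ)) := Real.rpow_pos_of_pos (by positivity) _
  have hε0 : 0 < ε := lt_min (by norm_num) hc0
  have hε1 : ε < 1 := lt_of_le_of_lt (min_le_left _ _) (by norm_num)
  -- key smallness bound
  have hkey : ∀ r : ℝ, 0 < r → r < ε → b * r ≤ r ^ (2*ρ) / 2 := by
    intro r hr hrε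
    have h1 : r ^ (1-2*ρ) < ((2*b)⁻¹ ^ (1/(1-2*ρ))) ^ (1-2*ρ) :=
      Real.rpow_lt_rpow hr.le (lt_of_lt_of_le hrε (min_le_right _ _)) he
    have h2 : ((2*b)⁻¹ ^ (1/(1-2*ρ))) ^ (1-2*ρ) = (2*b)⁻¹ := by
      rw [← Real.rpow_mul (by positivity), one_div,
        inv_mul_cancel₀ (ne_of_gt he), Real.rpow_one]
    have h3 : r ^ (1-2*ρ) * r ^ (2*ρ) = r := by
      rw [← Real.rpow_add hr]; norm_num
    have h4 : b * r ^ (1-2*ρ) ≤ 1/2 := by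
      rw [h2] at h1
      have h5 : b * r ^ (1-2*ρ) ≤ b * (2*b)⁻¹ := mul_le_mul_of_nonneg_left h1.le hb.le
      have h6 : b * (2*b)⁻¹ = 1/2 := by
        field_simp
      linarith
    calc b * r = (b * r ^ (1-2*ρ)) * r ^ (2*ρ) := by rw [mul_assoc, h3]
      _ ≤ (1/2) * r ^ (2*ρ) :=
          mul_le_mul_of_nonneg_right h4 (Real.rpow_nonneg hr.le _)
      _ = r ^ (2*ρ) / 2 := by ring
  have hIoo : Set.Ioo (0:ℝ) ε ∈ 𝓝[>] (0:ℝ) := Ioo_mem_nhdsGT hε0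
  refine ⟨ε, hε0, hε1, fun r => ((sf ρ θ r - Dd b ρ θ r : ℝ) : ℂ),
    fun r => ((sf ρ θ r - Dd a ρ θ r : ℝ) : ℂ),
    fun r => ((sf ρ θ r + Dd b ρ θ r : ℝ) : ℂ),
    fun r => ((sf ρ θ r + Dd a ρ θ r : ℝ) : ℂ), ?_, ?_, ?_, ?_, ?_⟩
  · -- roots
    intro r hr hrε
    have hkb := hkey r hr hrε
    have hka : a*r ≤ r ^ (2*ρ)/2 := le_trans (by nlinarith) hkb
    have hu0 : (0:ℝ) ≤ r ^ (2*θ) := Real.rpow_nonneg hr.le _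
    have hts : r ^ (2*ρ)/2 ≤ sf ρ θ r := by rw [sf]; linarith
    have hs0 : 0 < sf ρ θ r :=
      lt_of_lt_of_le (by positivity : (0:ℝ) < r ^ (2*ρ)/2) hts
    have hDa2 : (Dd a ρ θ r)^2 = (sf ρ θ r)^2 - a^2*r^2 :=
      Real.sq_sqrt (by nlinarith [mul_pos ha hr])
    have hDb2 : (Dd b ρ θ r)^2 = (sf ρ θ r)^2 - b^2*r^2 :=
      Real.sq_sqrt (by nlinarith [mul_pos hb hr])
    have hDaC : ((Dd a ρ θ r : ℝ):ℂ)^2 = ((sf ρ θ r : ℝ):ℂ)^2 - (a:ℂ)^2*(r:ℂ)^2 := by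
      have := congrArg (fun x : ℝ => (x:ℂ)) hDa2; push_cast at this; exact this
    have hDbC : ((Dd b ρ θ r : ℝ):ℂ)^2 = ((sf ρ θ r : ℝ):ℂ)^2 - (b:ℂ)^2*(r:ℂ)^2 := by
      have := congrArg (fun x : ℝ => (x:ℂ)) hDb2; push_cast at this; exact this
    rw [charpoly_Bmat a b ρ θ r (sf ρ θ r) rfl (Dd a ρ θ r) (Dd b ρ θ r) hDaC hDbC,
      roots_four]
    push_cast
    rfl
  · rw [Asymptotics.isBigO_iff]
    refine ⟨4*b^4 + 2*b^2, ?_⟩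
    filter_upwards [hIoo] with r hrI
    obtain ⟨hr, hrε⟩ := hrI
    have h := est_small b ρ θ r hb hρ hθ hr (hrε.trans hε1) (hkey r hr hrε)
    rw [show ((sf ρ θ r - Dd b ρ θ r : ℝ):ℂ) - ((b^2 * r ^ (2-2*ρ) : ℝ):ℂ)
        = ((sf ρ θ r - Dd b ρ θ r - b^2 * r ^ (2-2*ρ) : ℝ):ℂ) by push_cast; ring,
      Complex.norm_real, Real.norm_eq_abs, Real.norm_eq_abs,
      abs_of_pos (Real.rpow_pos_of_pos hr _)]
    exact h
  · rw [Asymptotics.isBigO_iff]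
    refine ⟨4*a^4 + 2*a^2, ?_⟩
    filter_upwards [hIoo] with r hrI
    obtain ⟨hr, hrε⟩ := hrI
    have hka : a*r ≤ r ^ (2*ρ)/2 := le_trans (by nlinarith) (hkey r hr hrε)
    have h := est_small a ρ θ r ha hρ hθ hr (hrε.trans hε1) hka
    rw [show ((sf ρ θ r - Dd a ρ θ r : ℝ):ℂ) - ((a^2 * r ^ (2-2*ρ) : ℝ):ℂ)
        = ((sf ρ θ r - Dd a ρ θ r - a^2 * r ^ (2-2*ρ) : ℝ):ℂ) by push_cast; ring,
      Complex.norm_real, Real.norm_eq_abs, Real.norm_eq_abs,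
      abs_of_pos (Real.rpow_pos_of_pos hr _)]
    exact h
  · rw [Asymptotics.isBigO_iff]
    refine ⟨1 + (4*b^4 + 2*b^2), ?_⟩
    filter_upwards [hIoo] with r hrI
    obtain ⟨hr, hrε⟩ := hrI
    have h := est_big b ρ θ r hb hρ hθ hr (hrε.trans hε1) (hkey r hr hrε)
    rw [show ((sf ρ θ r + Dd b ρ θ r : ℝ):ℂ) - ((r ^ (2*ρ) - b^2 * r ^ (2-2*ρ) : ℝ):ℂ)
        = ((sf ρ θ r + Dd b ρ θ r - (r ^ (2*ρ) - b^2 * r ^ (2-2*ρ)) : ℝ):ℂ) by push_cast; ring,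
      Complex.norm_real, Real.norm_eq_abs, Real.norm_eq_abs,
      abs_of_pos (Real.rpow_pos_of_pos hr _)]
    exact h
  · rw [Asymptotics.isBigO_iff]
    refine ⟨1 + (4*a^4 + 2*a^2), ?_⟩
    filter_upwards [hIoo] with r hrI
    obtain ⟨hr, hrε⟩ := hrI
    have hka : a*r ≤ r ^ (2*ρ)/2 := le_trans (by nlinarith) (hkey r hr hrε)
    have h := est_big a ρ θ r ha hρ hθ hr (hrε.trans hε1) hka
    rw [show ((sf ρ θ r + Dd a ρ θ r : ℝ):ℂ) - ((r ^ (2*ρ) - a^2 * r ^ (2-2*ρ) : ℝ):ℂ)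
        = ((sf ρ θ r + Dd a ρ θ r - (r ^ (2*ρ) - a^2 * r ^ (2-2*ρ)) : ℝ):ℂ) by push_cast; ring,
      Complex.norm_real, Real.norm_eq_abs, Real.norm_eq_abs,
      abs_of_pos (Real.rpow_pos_of_pos hr _)]
    exact h
end
end

section
/- (Large-frequency eigenvalue asymptotics, case ρ+θ = 1) Assume additionally ρ + θ = 1. Then there exist N > 1 and functions μ₁, μ₂, μ₃, μ₄ : (N,∞) → ℂ such that for every r > N the multiset of roots (with multiplicity) of the characteristic polynomial of B(r) is {μ₁(r), μ₂(r), μ₃(r), μ₄(r)}, and as r → ∞: μ₁(r) − b²r^{2−2θ} = O(r^{3−4θ}), μ₂(r) − a²r^{2−2θ} = O(r^{3−4θ}), μ₃(r) − (r^{2θ} + (1−b²)r^{2−2θ}) = O(r^{3−4θ}), and μ₄(r) − (r^{2θ} + (1−a²)r^{2−2θ}) = O(r^{3−4θ}). -/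
noncomputable section

open Asymptotics Filter Topology
open Polynomial

lemma charpoly_aux_s8 (p c d : ℂ) :
    (!![p-c,0,p,0; 0,p-d,0,p; p,0,p+c,0; 0,p,0,p+d]).charpoly
      = (X^2 - C (2*p) * X - C (c^2)) * (X^2 - C (2*p) * X - C (d^2)) := by
  rw [Matrix.charpoly]
  simp [Matrix.det_succ_row_zero, Fin.sum_univ_succ, Matrix.charmatrix_apply,
    Matrix.diagonal, Fin.succAbove, map_ofNat]
  ring

lemma quad_fact (s k : ℝ) (hD : 0 ≤ s^2 - k) :
    (X^2 - C (2*(s:ℂ)) * X - C (-(k:ℂ)))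
      = (X - C (((s - Real.sqrt (s^2-k) : ℝ)):ℂ)) * (X - C (((s + Real.sqrt (s^2-k)):ℝ):ℂ)) := by
  have h0 : Real.sqrt (s^2-k) ^ 2 = s^2 - k := Real.sq_sqrt hD
  have h1 : (((s - Real.sqrt (s^2-k) : ℝ)):ℂ) + (((s + Real.sqrt (s^2-k)):ℝ):ℂ) = 2*(s:ℂ) := by
    push_cast; ring
  have h2r : (s - Real.sqrt (s^2-k)) * (s + Real.sqrt (s^2-k)) = k := by nlinarith [h0]
  have h2 : (((s - Real.sqrt (s^2-k) : ℝ)):ℂ) * (((s + Real.sqrt (s^2-k)):ℝ):ℂ) = (k:ℂ) := by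
    rw [← Complex.ofReal_mul, h2r]
  rw [map_neg, sub_neg_eq_add, ← h1, ← h2, C_add, C_mul]
  ring

set_option maxHeartbeats 1000000 in
/-- Key elementary estimate. -/
lemma sqrt_est (c u v : ℝ) (hc : 0 < c) (hu : 0 < u) (hK : 32*(c^2+1)*u ≤ v) :
    0 ≤ ((u+v)/2)^2 - c^2*(u*v) ∧
    |Real.sqrt (((u+v)/2)^2 - c^2*(u*v)) - ((v-u)/2 + (1-c^2)*u)| ≤ 4*c^2*(c^2+1)*u^2/v := by
  obtain ⟨D, hDdef⟩ : ∃ D, D = ((u+v)/2)^2 - c^2*(u*v) := ⟨_, rfl⟩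
  obtain ⟨E, hEdef⟩ : ∃ E, E = (v-u)/2 + (1-c^2)*u := ⟨_, rfl⟩
  rw [← hDdef, ← hEdef]
  have hc1 : (1:ℝ) ≤ c^2+1 := by nlinarith
  have hv : 0 < v := lt_of_lt_of_le (by positivity) hK
  have huc : (c^2+1)*u ≤ v/32 := by linarith
  have hu32 : u ≤ v/32 := by nlinarith
  have h1 : (c^2+1)*u*v ≤ v/32*v := mul_le_mul_of_nonneg_right huc hv.le
  have hDlb : v^2/16 ≤ D := by rw [hDdef]; nlinarith [sq_nonneg u, mul_pos hu hv]
  have hD0 : 0 ≤ D := le_trans (by positivity) hDlb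
  have hsq : Real.sqrt D ^ 2 = D := Real.sq_sqrt hD0
  have hsqlb : v/4 ≤ Real.sqrt D := by
    rw [show v/4 = Real.sqrt ((v/4)^2) from (Real.sqrt_sq (by positivity)).symm]
    exact Real.sqrt_le_sqrt (by nlinarith)
  have hE : v/4 ≤ E := by rw [hEdef]; nlinarith
  have hden : 0 < Real.sqrt D + E := by linarith
  have hkey : (Real.sqrt D - E) * (Real.sqrt D + E) = c^2*(1-c^2)*u^2 := by
    have h3 : Real.sqrt D ^2 - E^2 = c^2*(1-c^2)*u^2 := by rw [hsq, hDdef, hEdef]; ring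
    linear_combination h3
  have heq : Real.sqrt D - E = c^2*(1-c^2)*u^2 / (Real.sqrt D + E) := by
    field_simp
    linear_combination hkey
  refine ⟨hD0, ?_⟩
  rw [heq, abs_div, abs_of_pos hden]
  have habs1 : |1-c^2| ≤ c^2+1 := abs_le.2 ⟨by nlinarith, by nlinarith⟩
  have hnum : |c^2*(1-c^2)*u^2| ≤ c^2*(c^2+1)*u^2 := by
    rw [abs_mul, abs_mul, abs_of_nonneg (sq_nonneg c), abs_of_nonneg (sq_nonneg u)]
    exact mul_le_mul_of_nonneg_right
      (mul_le_mul_of_nonneg_left habs1 (sq_nonneg c)) (sq_nonneg u)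
  have hstep : (c^2*(c^2+1)*u^2) / (v/2) ≤ 4*c^2*(c^2+1)*u^2/v := by
    rw [div_le_div_iff₀ (by linarith) hv]
    nlinarith [mul_nonneg (mul_nonneg (mul_nonneg (sq_nonneg c)
      (by positivity : (0:ℝ) ≤ c^2+1)) (sq_nonneg u)) hv.le]
  refine le_trans (div_le_div₀ (by positivity) hnum (by linarith) (by linarith)) hstep

set_option maxHeartbeats 1000000 in
/-- Large-frequency eigenvalue asymptotics in the case `ρ + θ = 1`. -/
theorem stmt8 (a b ρ θ : ℝ) (ha : 0 < a) (hab : a < b)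
    (hρ0 : 0 ≤ ρ) (hρ : ρ < 1/2) (hθ : 1/2 < θ) (hθ1 : θ ≤ 1)
    (hsum : ρ + θ = 1) :
    ∃ N : ℝ, 1 < N ∧ ∃ m₁ m₂ m₃ m₄ : ℝ → ℂ,
      (∀ r : ℝ, N < r →
        (Bmat a b ρ θ r).charpoly.roots = {m₁ r, m₂ r, m₃ r, m₄ r}) ∧
      (fun r : ℝ => m₁ r - ((b^2 * r ^ (2 - 2*θ) : ℝ) : ℂ))
        =O[atTop] (fun r : ℝ => r ^ (3 - 4*θ)) ∧
      (fun r : ℝ => m₂ r - ((a^2 * r ^ (2 - 2*θ) : ℝ) : ℂ))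
        =O[atTop] (fun r : ℝ => r ^ (3 - 4*θ)) ∧
      (fun r : ℝ => m₃ r - ((r ^ (2*θ) + (1 - b^2) * r ^ (2 - 2*θ) : ℝ) : ℂ))
        =O[atTop] (fun r : ℝ => r ^ (3 - 4*θ)) ∧
      (fun r : ℝ => m₄ r - ((r ^ (2*θ) + (1 - a^2) * r ^ (2 - 2*θ) : ℝ) : ℂ))
        =O[atTop] (fun r : ℝ => r ^ (3 - 4*θ)) := by
  have hb0 : 0 < b := ha.trans hab
  have hexp : (0:ℝ) < 2*θ - 2*ρ := by linarith
  obtain ⟨N₀, hN₀⟩ := eventually_atTop.1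
    ((tendsto_rpow_atTop hexp).eventually_ge_atTop (32*(b^2+1)))
  set N : ℝ := max N₀ 2 with hNdef
  have hN1 : 1 < N := lt_of_lt_of_le (by norm_num) (le_max_right _ _)
  set sR : ℝ → ℝ := fun r => (r^(2*ρ) + r^(2*θ))/2 with hsRdef
  have master : ∀ c:ℝ, 0 < c → c ≤ b → ∀ r:ℝ, N ≤ r →
      0 ≤ (sR r)^2 - (c*r)^2 ∧
      |Real.sqrt ((sR r)^2 - (c*r)^2) - (r^(2*θ) - sR r + (1-c^2)*r^(2*ρ))|
        ≤ 4*c^2*(c^2+1) * r^(3-4*θ) := by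
    intro c hc hcb r hr
    have hr2 : (2:ℝ) ≤ r := le_trans (le_max_right _ _) hr
    have hr0 : (0:ℝ) < r := by linarith
    have hr1 : (1:ℝ) ≤ r := by linarith
    have hu : 0 < r^(2*ρ) := Real.rpow_pos_of_pos hr0 _
    have hv0 : 0 < r^(2*θ) := Real.rpow_pos_of_pos hr0 _
    have hK' : 32*(b^2+1) ≤ r^(2*θ-2*ρ) := hN₀ r (le_trans (le_max_left _ _) hr)
    have hmulexp : r^(2*θ-2*ρ) * r^(2*ρ) = r^(2*θ) := by
      rw [← Real.rpow_add hr0]; congr 1; ring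
    have hKc : 32*(c^2+1)*r^(2*ρ) ≤ r^(2*θ) := by
      have hcb2 : c^2 ≤ b^2 := by nlinarith
      calc 32*(c^2+1)*r^(2*ρ) ≤ 32*(b^2+1)*r^(2*ρ) := by
            nlinarith [mul_le_mul_of_nonneg_right hcb2 hu.le]
        _ ≤ r^(2*θ-2*ρ) * r^(2*ρ) := mul_le_mul_of_nonneg_right hK' hu.le
        _ = r^(2*θ) := hmulexp
    obtain ⟨hD0', hEst⟩ := sqrt_est c (r^(2*ρ)) (r^(2*θ)) hc hu hKc
    have huv : r^(2*ρ) * r^(2*θ) = r^2 := by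
      rw [← Real.rpow_add hr0, show 2*ρ+2*θ = ((2:ℕ):ℝ) by push_cast; linarith,
        Real.rpow_natCast]
    have harg : (sR r)^2 - (c*r)^2 = ((r^(2*ρ)+r^(2*θ))/2)^2 - c^2*(r^(2*ρ)*r^(2*θ)) := by
      rw [huv, hsRdef]; ring
    have hEeq : r^(2*θ) - sR r + (1-c^2)*r^(2*ρ)
        = (r^(2*θ)-r^(2*ρ))/2 + (1-c^2)*r^(2*ρ) := by rw [hsRdef]; ring
    refine ⟨by rw [harg]; exact hD0', ?_⟩
    rw [harg, hEeq]
    refine le_trans hEst ?_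
    have hu2 : (r^(2*ρ))^2 = r^(4*ρ) := by
      rw [← Real.rpow_natCast (r^(2*ρ)) 2, ← Real.rpow_mul hr0.le]
      congr 1; push_cast; ring
    have hdiv : (r^(2*ρ))^2/r^(2*θ) = r^(4*ρ-2*θ) := by
      rw [hu2, ← Real.rpow_sub hr0]
    have hle : r^(4*ρ-2*θ) ≤ r^(3-4*θ) := by
      apply Real.rpow_le_rpow_of_exponent_le hr1; linarith
    calc 4*c^2*(c^2+1)*(r^(2*ρ))^2/r^(2*θ) = 4*c^2*(c^2+1)*((r^(2*ρ))^2/r^(2*θ)) := by ring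
      _ = 4*c^2*(c^2+1)*r^(4*ρ-2*θ) := by rw [hdiv]
      _ ≤ 4*c^2*(c^2+1)*r^(3-4*θ) := by
          apply mul_le_mul_of_nonneg_left hle; positivity
  have h2θρ : (2:ℝ) - 2*θ = 2*ρ := by linarith
  -- the big-O helper
  have bigO : ∀ c:ℝ, 0 < c → c ≤ b → ∀ f : ℝ → ℝ,
      (∀ r:ℝ, N ≤ r → |f r| = |Real.sqrt ((sR r)^2 - (c*r)^2)
        - (r^(2*θ) - sR r + (1-c^2)*r^(2*ρ))|) →
      (fun r : ℝ => ((f r : ℝ):ℂ)) =O[atTop] (fun r : ℝ => r ^ (3 - 4*θ)) := by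
    intro c hc hcb f hf
    apply IsBigO.of_bound (4*c^2*(c^2+1))
    filter_upwards [eventually_ge_atTop N] with r hr
    have hr2 : (2:ℝ) ≤ r := le_trans (le_max_right _ _) hr
    have hr0 : (0:ℝ) < r := by linarith
    have hEst := (master c hc hcb r hr).2
    rw [Complex.norm_real, Real.norm_eq_abs, Real.norm_eq_abs, hf r hr,
      abs_of_pos (Real.rpow_pos_of_pos hr0 _)]
    exact hEst
  refine ⟨N, hN1,
    (fun r => (((sR r - Real.sqrt ((sR r)^2 - (b*r)^2)) : ℝ) : ℂ)),
    (fun r => (((sR r - Real.sqrt ((sR r)^2 - (a*r)^2)) : ℝ) : ℂ)),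
    (fun r => (((sR r + Real.sqrt ((sR r)^2 - (b*r)^2)) : ℝ) : ℂ)),
    (fun r => (((sR r + Real.sqrt ((sR r)^2 - (a*r)^2)) : ℝ) : ℂ)), ?_, ?_, ?_, ?_, ?_⟩
  · -- roots equality
    intro r hrN
    have hDb := (master b hb0 le_rfl r hrN.le).1
    have hDa := (master a ha hab.le r hrN.le).1
    have hI2 : ∀ x:ℝ, (Complex.I*((x:ℝ):ℂ))^2 = -(((x^2 : ℝ)):ℂ) := by
      intro x; rw [mul_pow, Complex.I_sq]; push_cast; ring
    have hBmat : Bmat a b ρ θ r =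
        !![((sR r:ℝ):ℂ) - Complex.I*((b*r:ℝ):ℂ), 0, ((sR r:ℝ):ℂ), 0;
           0, ((sR r:ℝ):ℂ) - Complex.I*((a*r:ℝ):ℂ), 0, ((sR r:ℝ):ℂ);
           ((sR r:ℝ):ℂ), 0, ((sR r:ℝ):ℂ) + Complex.I*((b*r:ℝ):ℂ), 0;
           0, ((sR r:ℝ):ℂ), 0, ((sR r:ℝ):ℂ) + Complex.I*((a*r:ℝ):ℂ)] := by
      ext i j
      fin_cases i <;> fin_cases j <;>
        simp [Bmat, B0, B1, hsRdef, Matrix.vecHead, Matrix.vecTail] <;> push_cast <;> ring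
    have hcp : (Bmat a b ρ θ r).charpoly =
        (({(((sR r - Real.sqrt ((sR r)^2 - (b*r)^2)) : ℝ) : ℂ),
           (((sR r - Real.sqrt ((sR r)^2 - (a*r)^2)) : ℝ) : ℂ),
           (((sR r + Real.sqrt ((sR r)^2 - (b*r)^2)) : ℝ) : ℂ),
           (((sR r + Real.sqrt ((sR r)^2 - (a*r)^2)) : ℝ) : ℂ)} : Multiset ℂ).map
          fun z => X - C z).prod := by
      rw [hBmat, charpoly_aux_s8, hI2 (b*r), hI2 (a*r),
        quad_fact (sR r) ((b*r)^2) hDb, quad_fact (sR r) ((a*r)^2) hDa]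
      simp only [Multiset.insert_eq_cons, Multiset.map_cons, Multiset.map_singleton,
        Multiset.prod_cons, Multiset.prod_singleton]
      ring
    rw [hcp, Polynomial.roots_multiset_prod_X_sub_C]
  · -- m₁
    have := bigO b hb0 le_rfl
      (fun r => sR r - Real.sqrt ((sR r)^2 - (b*r)^2) - b^2 * r^(2-2*θ))
      (by intro r hr
          rw [h2θρ]
          rw [show sR r - Real.sqrt ((sR r)^2 - (b*r)^2) - b^2 * r^(2*ρ)
            = -(Real.sqrt ((sR r)^2 - (b*r)^2) - (r^(2*θ) - sR r + (1-b^2)*r^(2*ρ))) by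
              rw [hsRdef]; ring, abs_neg])
    refine this.congr_left fun r => ?_
    push_cast; ring
  · -- m₂
    have := bigO a ha hab.le
      (fun r => sR r - Real.sqrt ((sR r)^2 - (a*r)^2) - a^2 * r^(2-2*θ))
      (by intro r hr
          rw [h2θρ]
          rw [show sR r - Real.sqrt ((sR r)^2 - (a*r)^2) - a^2 * r^(2*ρ)
            = -(Real.sqrt ((sR r)^2 - (a*r)^2) - (r^(2*θ) - sR r + (1-a^2)*r^(2*ρ))) by
              rw [hsRdef]; ring, abs_neg])
    refine this.congr_left fun r => ?_
    push_cast; ring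
  · -- m₃
    have := bigO b hb0 le_rfl
      (fun r => sR r + Real.sqrt ((sR r)^2 - (b*r)^2) - (r^(2*θ) + (1-b^2) * r^(2-2*θ)))
      (by intro r hr
          rw [h2θρ]
          rw [show sR r + Real.sqrt ((sR r)^2 - (b*r)^2) - (r^(2*θ) + (1-b^2)*r^(2*ρ))
            = Real.sqrt ((sR r)^2 - (b*r)^2) - (r^(2*θ) - sR r + (1-b^2)*r^(2*ρ)) by
              rw [hsRdef]; ring])
    refine this.congr_left fun r => ?_
    push_cast; ring
  · -- m₄
    have := bigO a ha hab.le
      (fun r => sR r + Real.sqrt ((sR r)^2 - (a*r)^2) - (r^(2*θ) + (1-a^2) * r^(2-2*θ)))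
      (by intro r hr
          rw [h2θρ]
          rw [show sR r + Real.sqrt ((sR r)^2 - (a*r)^2) - (r^(2*θ) + (1-a^2)*r^(2*ρ))
            = Real.sqrt ((sR r)^2 - (a*r)^2) - (r^(2*θ) - sR r + (1-a^2)*r^(2*ρ)) by
              rw [hsRdef]; ring])
    refine this.congr_left fun r => ?_
    push_cast; ring

end
end

section
/- (Large-frequency eigenvalue asymptotics, case ρ+θ > 1) Assume additionally ρ + θ > 1. Then there exist N > 1 and functions μ₁, μ₂, μ₃, μ₄ : (N,∞) → ℂ such that for every r > N the multiset of roots (with multiplicity) of the characteristic polynomial of B(r) is {μ₁(r), μ₂(r), μ₃(r), μ₄(r)}, and as r → ∞: μ₁(r) − b²r^{2−2θ} = O(r^{1+2ρ−2θ}), μ₂(r) − a²r^{2−2θ} = O(r^{1+2ρ−2θ}), μ₃(r) − (r^{2θ} + r^{2ρ} − b²r^{2−2θ}) = O(r^{1+2ρ−2θ}), and μ₄(r) − (r^{2θ} + r^{2ρ} − a²r^{2−2θ}) = O(r^{1+2ρ−2θ}). -/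
noncomputable section

open Asymptotics Filter Topology Polynomial

theorem zz_charpoly4 (S P Q : ℂ) :
    (!![S-P,0,S,0; 0,S-Q,0,S; S,0,S+P,0; 0,S,0,S+Q] : Matrix (Fin 4) (Fin 4) ℂ).charpoly
    = (X^2 - 2*C S*X - (C P)^2) * (X^2 - 2*C S*X - (C Q)^2) := by
  rw [Matrix.charpoly]
  rw [show ((!![S-P,0,S,0; 0,S-Q,0,S; S,0,S+P,0; 0,S,0,S+Q] : Matrix (Fin 4) (Fin 4) ℂ).charmatrix)
    = !![X - C (S-P), 0, -C S, 0; 0, X - C (S-Q), 0, -C S; -C S, 0, X - C (S+P), 0; 0, -C S, 0, X - C (S+Q)] from by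
      ext i j
      fin_cases i <;> fin_cases j <;>
        simp [Matrix.charmatrix_apply, Matrix.one_apply]]
  rw [Matrix.det_succ_row_zero]
  simp [Fin.sum_univ_succ, Matrix.det_fin_three, Matrix.submatrix, Fin.succAbove]
  ring

theorem zz_quadfac (S c μ ν : ℂ) (h1 : μ + ν = 2*S) (h2 : μ * ν = -c^2) :
    (X^2 - 2*C S*X - (C c)^2 : ℂ[X]) = (X - C μ) * (X - C ν) := by
  have H1 : C μ + C ν = 2 * C S := by rw [← map_add, h1, map_mul, map_ofNat]
  have H2 : C μ * C ν = -(C c)^2 := by rw [← map_mul, h2, map_neg, map_pow]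
  linear_combination X * H1 - H2

theorem zz_roots4 (S P Q μ₁ μ₂ μ₃ μ₄ : ℂ) (h1 : μ₁ + μ₃ = 2*S) (h2 : μ₁ * μ₃ = -P^2)
    (h3 : μ₂ + μ₄ = 2*S) (h4 : μ₂ * μ₄ = -Q^2) :
    (!![S-P,0,S,0; 0,S-Q,0,S; S,0,S+P,0; 0,S,0,S+Q] : Matrix (Fin 4) (Fin 4) ℂ).charpoly.roots
    = {μ₁, μ₂, μ₃, μ₄} := by
  have : (!![S-P,0,S,0; 0,S-Q,0,S; S,0,S+P,0; 0,S,0,S+Q] : Matrix (Fin 4) (Fin 4) ℂ).charpoly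
      = (({μ₁, μ₂, μ₃, μ₄} : Multiset ℂ).map fun z => X - C z).prod := by
    rw [zz_charpoly4, zz_quadfac S P μ₁ μ₃ h1 h2, zz_quadfac S Q μ₂ μ₄ h3 h4]
    simp [Multiset.map_cons, Multiset.prod_cons]
    ring
  rw [this, Polynomial.roots_multiset_prod_X_sub_C]

set_option maxHeartbeats 1000000 in
theorem zz_abstract_bound (b c r R T E : ℝ) (hb : 0 < b) (hc : 0 < c) (hcb : c ≤ b)
    (hr0 : 0 < r) (hR0 : 0 < R) (hT0 : 0 < T) (hbr : 2*(b*r) ≤ T)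
    (hr2T : r^2 ≤ R*T) (hE : r^2*R ≤ E*T^2) (hE0 : 0 < E) :
    |((R+T)/2 - Real.sqrt (((R+T)/2)^2 - c^2*r^2)) - c^2*r^2/T|
      ≤ 2*b^2*(1+2*b^2)*E := by
  have hs0 : 0 < (R+T)/2 := by linarith
  have hcrbr : c*r ≤ b*r := mul_le_mul_of_nonneg_right hcb hr0.le
  have hcr : c * r ≤ (R+T)/2 := by linarith
  have hcr0 : 0 < c * r := mul_pos hc hr0
  have hcs2 : c^2 * r^2 ≤ ((R+T)/2)^2 := by
    have := mul_self_le_mul_self hcr0.le hcr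
    nlinarith
  set s : ℝ := (R+T)/2 with hs_eq
  set D := Real.sqrt (s^2 - c^2*r^2) with hDdef
  have hD0 : 0 ≤ D := Real.sqrt_nonneg _
  have hD2 : D^2 = s^2 - c^2*r^2 := Real.sq_sqrt (by linarith)
  have hDs : D ≤ s := by
    have h := Real.sqrt_le_sqrt (show s^2 - c^2*r^2 ≤ s^2 by nlinarith)
    rwa [Real.sqrt_sq hs0.le] at h
  have hkey : (s - D)*(s + D) = c^2*r^2 := by linear_combination -hD2
  have hμ0 : 0 ≤ s - D := by linarith
  have hsD0 : 0 < s + D := by linarith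
  have hsge : T/2 ≤ s + D := by rw [hs_eq]; linarith
  have hμ : s - D = c^2*r^2/(s+D) := by rw [eq_div_iff hsD0.ne']; exact hkey
  have hc2b2 : c^2 ≤ b^2 := by nlinarith
  have hc2r2 : c^2*r^2 ≤ b^2*r^2 := by nlinarith
  have h2 : c^2*r^2 ≤ b^2*(R*T) := by nlinarith
  have hμub : s - D ≤ 2*b^2*R := by
    have h1 : (s-D)*(T/2) ≤ (s-D)*(s+D) := mul_le_mul_of_nonneg_left hsge hμ0
    rw [hkey] at h1
    have h3 : (s-D)*T ≤ (2*b^2*R)*T := by linarith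
    exact le_of_mul_le_mul_right h3 hT0
  have hb2R : (0:ℝ) ≤ b^2*R := by positivity
  have habs : |T - (s+D)| ≤ (1+2*b^2)*R := by
    have hTeq : T - (s+D) = (s - D) - R := by rw [hs_eq]; ring
    have hexp : (1+2*b^2)*R = R + 2*(b^2*R) := by ring
    rw [hTeq, abs_le, hexp]
    constructor <;> linarith [hμub, hμ0, hR0]
  have hdiffeq : (s - D) - c^2*r^2/T = c^2*r^2*(T - (s+D))/((s+D)*T) := by
    rw [hμ]; field_simp
  rw [hdiffeq, abs_div, abs_mul, abs_of_pos (by positivity : (0:ℝ) < c^2*r^2),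
    abs_of_pos (mul_pos hsD0 hT0), div_le_iff₀ (mul_pos hsD0 hT0)]
  have hT2 : T*T ≤ 2*((s+D)*T) := by
    have hT2s : T ≤ 2*(s+D) := by rw [hs_eq]; linarith
    calc T*T ≤ (2*(s+D))*T := mul_le_mul_of_nonneg_right hT2s hT0.le
      _ = 2*((s+D)*T) := by ring
  have k1 : c^2*r^2*|T - (s+D)| ≤ (b^2*r^2)*((1+2*b^2)*R) :=
    mul_le_mul hc2r2 habs (abs_nonneg _) (by positivity)
  have k2 : (b^2*r^2)*((1+2*b^2)*R) = (b^2*(1+2*b^2))*(r^2*R) := by ring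
  have k3 : (b^2*(1+2*b^2))*(r^2*R) ≤ (b^2*(1+2*b^2))*(E*T^2) :=
    mul_le_mul_of_nonneg_left hE (by positivity)
  have k4 : (b^2*(1+2*b^2))*(E*T^2) ≤ 2*b^2*(1+2*b^2)*E*((s+D)*T) := by
    calc (b^2*(1+2*b^2))*(E*T^2) = (b^2*(1+2*b^2)*E)*(T*T) := by ring
      _ ≤ (b^2*(1+2*b^2)*E)*(2*((s+D)*T)) :=
          mul_le_mul_of_nonneg_left hT2 (by positivity)
      _ = 2*b^2*(1+2*b^2)*E*((s+D)*T) := by ring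
  linarith

/-- rpow wrapper for the key bound -/
theorem zz_rpow_bound (b c ρ θ r : ℝ) (hb : 0 < b) (hc : 0 < c) (hcb : c ≤ b)
    (hρ0 : 0 ≤ ρ) (hθ : 1/2 < θ) (hsum : 1 < ρ + θ) (hθ1 : θ ≤ 1)
    (hr : 1 ≤ r) (hbr : 2*(b*r) ≤ r^(2*θ)) :
    |((r^(2*ρ)+r^(2*θ))/2 - Real.sqrt (((r^(2*ρ)+r^(2*θ))/2)^2 - c^2*r^2))
        - c^2 * r^(2-2*θ)|
      ≤ 2*b^2*(1+2*b^2) * r^(1+2*ρ-2*θ) := by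
  have hr0 : (0:ℝ) < r := lt_of_lt_of_le one_pos hr
  have hR0 : 0 < r ^ (2*ρ) := Real.rpow_pos_of_pos hr0 _
  have hT0 : 0 < r ^ (2*θ) := Real.rpow_pos_of_pos hr0 _
  have hE0 : 0 < r ^ (1+2*ρ-2*θ) := Real.rpow_pos_of_pos hr0 _
  have hr2T : r^2 ≤ r^(2*ρ) * r^(2*θ) := by
    have h1 : r ^ ((2:ℝ) - 2*θ) ≤ r ^ (2*ρ) :=
      Real.rpow_le_rpow_of_exponent_le hr (by linarith)
    have h2 : r ^ ((2:ℝ) - 2*θ) * r^(2*θ) = r^2 := by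
      rw [← Real.rpow_add hr0, ← Real.rpow_natCast r 2]; norm_num
    calc r^2 = r ^ ((2:ℝ)-2*θ) * r^(2*θ) := h2.symm
      _ ≤ r^(2*ρ) * r^(2*θ) := mul_le_mul_of_nonneg_right h1 hT0.le
  have hE : r^2 * r^(2*ρ) ≤ r^(1+2*ρ-2*θ) * (r^(2*θ))^2 := by
    have h1 : r^(1+2*ρ-2*θ) * (r^(2*θ))^2 = r ^ (1+2*ρ+2*θ) := by
      rw [sq, ← Real.rpow_add hr0, ← Real.rpow_add hr0]; ring_nf
    have h2 : r^2 * r^(2*ρ) = r ^ ((2:ℝ)+2*ρ) := by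
      rw [← Real.rpow_natCast r 2, ← Real.rpow_add hr0]; norm_num
    rw [h1, h2]
    exact Real.rpow_le_rpow_of_exponent_le hr (by linarith)
  have hpow : c^2 * r^(2-2*θ) = c^2*r^2/(r^(2*θ)) := by
    rw [eq_div_iff hT0.ne', mul_assoc, ← Real.rpow_natCast r 2,
      ← Real.rpow_add hr0]
    norm_num
  rw [hpow]
  exact zz_abstract_bound b c r _ _ _ hb hc hcb hr0 hR0 hT0 hbr hr2T hE hE0


lemma zz_sum (s d w : ℝ) (h : 2*s = w) :
    ((s-d : ℝ):ℂ) + ((s+d : ℝ):ℂ) = 2*((1/2*w : ℝ):ℂ) := by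
  push_cast [← h]; ring

lemma zz_mul (s d c x : ℝ) (h : (s-d)*(s+d) = c^2*x^2) :
    ((s-d : ℝ):ℂ) * ((s+d : ℝ):ℂ) = -(Complex.I*(x:ℂ)*(c:ℂ))^2 := by
  have h2 : (((s-d)*(s+d) : ℝ) : ℂ) = ((c^2*x^2 : ℝ):ℂ) := by rw [h]
  push_cast at h2 ⊢
  linear_combination h2 + ((x:ℂ)^2*(c:ℂ)^2) * Complex.I_sq

/-- Large-frequency eigenvalue asymptotics in the case `ρ + θ > 1`. -/
theorem stmt9 (a b ρ θ : ℝ) (ha : 0 < a) (hab : a < b)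
    (hρ0 : 0 ≤ ρ) (hρ : ρ < 1/2) (hθ : 1/2 < θ) (hθ1 : θ ≤ 1)
    (hsum : 1 < ρ + θ) :
    ∃ N : ℝ, 1 < N ∧ ∃ m₁ m₂ m₃ m₄ : ℝ → ℂ,
      (∀ r : ℝ, N < r →
        (Bmat a b ρ θ r).charpoly.roots = {m₁ r, m₂ r, m₃ r, m₄ r}) ∧
      (fun r : ℝ => m₁ r - ((b^2 * r ^ (2 - 2*θ) : ℝ) : ℂ))
        =O[atTop] (fun r : ℝ => r ^ (1 + 2*ρ - 2*θ)) ∧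
      (fun r : ℝ => m₂ r - ((a^2 * r ^ (2 - 2*θ) : ℝ) : ℂ))
        =O[atTop] (fun r : ℝ => r ^ (1 + 2*ρ - 2*θ)) ∧
      (fun r : ℝ => m₃ r - ((r ^ (2*θ) + r ^ (2*ρ) - b^2 * r ^ (2 - 2*θ) : ℝ) : ℂ))
        =O[atTop] (fun r : ℝ => r ^ (1 + 2*ρ - 2*θ)) ∧
      (fun r : ℝ => m₄ r - ((r ^ (2*θ) + r ^ (2*ρ) - a^2 * r ^ (2 - 2*θ) : ℝ) : ℂ))
        =O[atTop] (fun r : ℝ => r ^ (1 + 2*ρ - 2*θ)) := by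
  have hb0 : 0 < b := lt_trans ha hab
  set N : ℝ := max 2 ((2*b) ^ ((2*θ-1)⁻¹)) with hNdef
  have h2θ : (0:ℝ) < 2*θ - 1 := by linarith
  have hNfact : ∀ r : ℝ, N < r → 1 ≤ r ∧ 2*(b*r) ≤ r^(2*θ) := by
    intro r hrN
    have hr2 : (2:ℝ) < r := lt_of_le_of_lt (le_max_left _ _) hrN
    have hr1 : (1:ℝ) ≤ r := by linarith
    have hr0 : (0:ℝ) < r := by linarith
    refine ⟨hr1, ?_⟩
    have hx : (2*b) ^ ((2*θ-1)⁻¹) < r := lt_of_le_of_lt (le_max_right _ _) hrN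
    have step : 2*b ≤ r^(2*θ-1) := by
      have h := Real.rpow_le_rpow (by positivity) hx.le h2θ.le
      rw [← Real.rpow_mul (by positivity : (0:ℝ) ≤ 2*b), inv_mul_cancel₀ h2θ.ne',
        Real.rpow_one] at h
      exact h
    have hmul : r^(2*θ-1) * r = r^(2*θ) := by
      rw [← Real.rpow_add_one hr0.ne']; ring_nf
    calc 2*(b*r) = (2*b)*r := by ring
      _ ≤ r^(2*θ-1)*r := mul_le_mul_of_nonneg_right step hr0.le
      _ = r^(2*θ) := hmul
  refine ⟨N, lt_of_lt_of_le one_lt_two (le_max_left _ _), ?_⟩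
  refine ⟨fun r => (((r^(2*ρ)+r^(2*θ))/2
      - Real.sqrt (((r^(2*ρ)+r^(2*θ))/2)^2 - b^2*r^2) : ℝ) : ℂ),
    fun r => (((r^(2*ρ)+r^(2*θ))/2
      - Real.sqrt (((r^(2*ρ)+r^(2*θ))/2)^2 - a^2*r^2) : ℝ) : ℂ),
    fun r => (((r^(2*ρ)+r^(2*θ))/2
      + Real.sqrt (((r^(2*ρ)+r^(2*θ))/2)^2 - b^2*r^2) : ℝ) : ℂ),
    fun r => (((r^(2*ρ)+r^(2*θ))/2
      + Real.sqrt (((r^(2*ρ)+r^(2*θ))/2)^2 - a^2*r^2) : ℝ) : ℂ), ?_, ?_, ?_, ?_, ?_⟩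
  · -- roots
    intro r hrN
    beta_reduce
    obtain ⟨hr1, hbr⟩ := hNfact r hrN
    have hr0 : (0:ℝ) < r := lt_of_lt_of_le one_pos hr1
    set s : ℝ := (r^(2*ρ)+r^(2*θ))/2 with hs_def
    have hR0 : 0 < r ^ (2*ρ) := Real.rpow_pos_of_pos hr0 _
    have hbrs : b*r ≤ s := by rw [hs_def]; linarith
    have hars : a*r ≤ b*r := mul_le_mul_of_nonneg_right hab.le hr0.le
    have har0 : 0 < a*r := mul_pos ha hr0
    have hT0 : 0 < r ^ (2*θ) := Real.rpow_pos_of_pos hr0 _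
    have hs0 : 0 < s := by rw [hs_def]; linarith
    have hcs_b : b^2*r^2 ≤ s^2 := by nlinarith
    have hcs_a : a^2*r^2 ≤ s^2 := by nlinarith
    have hDb2 : (Real.sqrt (s^2 - b^2*r^2))^2 = s^2 - b^2*r^2 :=
      Real.sq_sqrt (by linarith)
    have hDa2 : (Real.sqrt (s^2 - a^2*r^2))^2 = s^2 - a^2*r^2 :=
      Real.sq_sqrt (by linarith)
    have hprod_b : (s - Real.sqrt (s^2 - b^2*r^2))*(s + Real.sqrt (s^2 - b^2*r^2))
        = b^2*r^2 := by linear_combination -hDb2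
    have hprod_a : (s - Real.sqrt (s^2 - a^2*r^2))*(s + Real.sqrt (s^2 - a^2*r^2))
        = a^2*r^2 := by linear_combination -hDa2
    have hBmat : Bmat a b ρ θ r =
        !![(((1/2) * (r ^ (2*ρ) + r ^ (2*θ)) : ℝ) : ℂ) - Complex.I*(r:ℂ)*(b:ℂ), 0,
            (((1/2) * (r ^ (2*ρ) + r ^ (2*θ)) : ℝ) : ℂ), 0;
          0, (((1/2) * (r ^ (2*ρ) + r ^ (2*θ)) : ℝ) : ℂ) - Complex.I*(r:ℂ)*(a:ℂ), 0,
            (((1/2) * (r ^ (2*ρ) + r ^ (2*θ)) : ℝ) : ℂ);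
          (((1/2) * (r ^ (2*ρ) + r ^ (2*θ)) : ℝ) : ℂ), 0,
            (((1/2) * (r ^ (2*ρ) + r ^ (2*θ)) : ℝ) : ℂ) + Complex.I*(r:ℂ)*(b:ℂ), 0;
          0, (((1/2) * (r ^ (2*ρ) + r ^ (2*θ)) : ℝ) : ℂ), 0,
            (((1/2) * (r ^ (2*ρ) + r ^ (2*θ)) : ℝ) : ℂ) + Complex.I*(r:ℂ)*(a:ℂ)] := by
      ext i j
      fin_cases i <;> fin_cases j <;>
        simp [Bmat, B0, B1, Matrix.vecHead, Matrix.vecTail] <;> ring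
    rw [hBmat]
    apply zz_roots4
    · exact zz_sum s _ _ (by rw [hs_def]; ring)
    · exact zz_mul s _ b r hprod_b
    · exact zz_sum s _ _ (by rw [hs_def]; ring)
    · exact zz_mul s _ a r hprod_a
  · rw [Asymptotics.isBigO_iff]
    refine ⟨2*b^2*(1+2*b^2), ?_⟩
    filter_upwards [eventually_gt_atTop N] with r hrN
    beta_reduce
    obtain ⟨hr1, hbr⟩ := hNfact r hrN
    have hr0 : (0:ℝ) < r := lt_of_lt_of_le one_pos hr1
    have hE0 : 0 < r ^ (1+2*ρ-2*θ) := Real.rpow_pos_of_pos hr0 _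
    have key := zz_rpow_bound b b ρ θ r hb0 hb0 le_rfl hρ0 hθ hsum hθ1 hr1 hbr
    have hcast : (((r^(2*ρ)+r^(2*θ))/2 - Real.sqrt (((r^(2*ρ)+r^(2*θ))/2)^2 - b^2*r^2) : ℝ) : ℂ) - ((b^2 * r ^ (2 - 2*θ) : ℝ) : ℂ) = ((((r^(2*ρ)+r^(2*θ))/2 - Real.sqrt (((r^(2*ρ)+r^(2*θ))/2)^2 - b^2*r^2)) - b^2*r^(2-2*θ) : ℝ) : ℂ) := by
      push_cast; ring
    rw [hcast, Complex.norm_real, Real.norm_eq_abs, Real.norm_eq_abs, abs_of_pos hE0]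
    exact key
  · rw [Asymptotics.isBigO_iff]
    refine ⟨2*b^2*(1+2*b^2), ?_⟩
    filter_upwards [eventually_gt_atTop N] with r hrN
    beta_reduce
    obtain ⟨hr1, hbr⟩ := hNfact r hrN
    have hr0 : (0:ℝ) < r := lt_of_lt_of_le one_pos hr1
    have hE0 : 0 < r ^ (1+2*ρ-2*θ) := Real.rpow_pos_of_pos hr0 _
    have key := zz_rpow_bound b a ρ θ r hb0 ha hab.le hρ0 hθ hsum hθ1 hr1 hbr
    have hcast : (((r^(2*ρ)+r^(2*θ))/2 - Real.sqrt (((r^(2*ρ)+r^(2*θ))/2)^2 - a^2*r^2) : ℝ) : ℂ) - ((a^2 * r ^ (2 - 2*θ) : ℝ) : ℂ) = ((((r^(2*ρ)+r^(2*θ))/2 - Real.sqrt (((r^(2*ρ)+r^(2*θ))/2)^2 - a^2*r^2)) - a^2*r^(2-2*θ) : ℝ) : ℂ) := by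
      push_cast; ring
    rw [hcast, Complex.norm_real, Real.norm_eq_abs, Real.norm_eq_abs, abs_of_pos hE0]
    exact key
  · rw [Asymptotics.isBigO_iff]
    refine ⟨2*b^2*(1+2*b^2), ?_⟩
    filter_upwards [eventually_gt_atTop N] with r hrN
    beta_reduce
    obtain ⟨hr1, hbr⟩ := hNfact r hrN
    have hr0 : (0:ℝ) < r := lt_of_lt_of_le one_pos hr1
    have hE0 : 0 < r ^ (1+2*ρ-2*θ) := Real.rpow_pos_of_pos hr0 _
    have key := zz_rpow_bound b b ρ θ r hb0 hb0 le_rfl hρ0 hθ hsum hθ1 hr1 hbr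
    have hcast : (((r^(2*ρ)+r^(2*θ))/2 + Real.sqrt (((r^(2*ρ)+r^(2*θ))/2)^2 - b^2*r^2) : ℝ) : ℂ) - ((r ^ (2*θ) + r ^ (2*ρ) - b^2 * r ^ (2 - 2*θ) : ℝ) : ℂ) = ((-(((r^(2*ρ)+r^(2*θ))/2 - Real.sqrt (((r^(2*ρ)+r^(2*θ))/2)^2 - b^2*r^2)) - b^2*r^(2-2*θ)) : ℝ) : ℂ) := by
      push_cast; ring
    rw [hcast, Complex.norm_real, Real.norm_eq_abs, abs_neg, Real.norm_eq_abs, abs_of_pos hE0]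
    exact key
  · rw [Asymptotics.isBigO_iff]
    refine ⟨2*b^2*(1+2*b^2), ?_⟩
    filter_upwards [eventually_gt_atTop N] with r hrN
    beta_reduce
    obtain ⟨hr1, hbr⟩ := hNfact r hrN
    have hr0 : (0:ℝ) < r := lt_of_lt_of_le one_pos hr1
    have hE0 : 0 < r ^ (1+2*ρ-2*θ) := Real.rpow_pos_of_pos hr0 _
    have key := zz_rpow_bound b a ρ θ r hb0 ha hab.le hρ0 hθ hsum hθ1 hr1 hbr
    have hcast : (((r^(2*ρ)+r^(2*θ))/2 + Real.sqrt (((r^(2*ρ)+r^(2*θ))/2)^2 - a^2*r^2) : ℝ) : ℂ) - ((r ^ (2*θ) + r ^ (2*ρ) - a^2 * r ^ (2 - 2*θ) : ℝ) : ℂ) = ((-(((r^(2*ρ)+r^(2*θ))/2 - Real.sqrt (((r^(2*ρ)+r^(2*θ))/2)^2 - a^2*r^2)) - a^2*r^(2-2*θ)) : ℝ) : ℂ) := by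
      push_cast; ring
    rw [hcast, Complex.norm_real, Real.norm_eq_abs, abs_neg, Real.norm_eq_abs, abs_of_pos hE0]
    exact key

end
end

section
/- (Sharp pointwise estimate) There exist constants C > 0 and c > 0 such that for every r > 0, every t ≥ 0 and every v ∈ ℂ⁴, ‖exp(−t B(r)) v‖ ≤ C exp(−c t · r^{2−2ρ}/(1 + r^{2θ−2ρ})) ‖v‖, where exp denotes the matrix exponential and ‖·‖ the Euclidean norm on ℂ⁴. -/
noncomputable section

/-- The Euclidean norm on `ℂ⁴`. -/
def euclNorm (v : Fin 4 → ℂ) : ℝ := Real.sqrt (∑ i, ‖v i‖ ^ 2)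

section Auxiliary

open NormedSpace Complex Matrix

set_option maxHeartbeats 1000000

private theorem matexp_hasDerivAt {n : Type*} [Fintype n] [DecidableEq n]
    (A : Matrix n n ℂ) (v : n → ℂ) (t : ℝ) :
    HasDerivAt (fun s : ℝ => (NormedSpace.exp (-(s:ℂ) • A)).mulVec v)
      (-(A.mulVec ((NormedSpace.exp (-(t:ℂ) • A)).mulVec v))) t := by
  letI : SeminormedRing (Matrix n n ℂ) := Matrix.linftyOpSemiNormedRing
  letI : NormedRing (Matrix n n ℂ) := Matrix.linftyOpNormedRing
  letI : NormedAlgebra ℂ (Matrix n n ℂ) := Matrix.linftyOpNormedAlgebra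
  have h1 : HasDerivAt (fun u : ℂ => NormedSpace.exp (u • (-A)))
      (NormedSpace.exp ((t:ℂ) • (-A)) * (-A)) (t:ℂ) := hasDerivAt_exp_smul_const (-A) (t:ℂ)
  have h2 : HasDerivAt (fun s : ℝ => NormedSpace.exp ((s:ℂ) • (-A)))
      (NormedSpace.exp ((t:ℂ) • (-A)) * (-A)) t := by
    have := (h1.hasFDerivAt.restrictScalars ℝ).comp_hasDerivAt t ofRealCLM.hasDerivAt
    exact this.congr_deriv (one_smul ℂ _)
  let L : Matrix n n ℂ →ₗ[ℂ] (n → ℂ) :=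
    { toFun := fun M => M.mulVec v
      map_add' := fun M N => Matrix.add_mulVec M N v
      map_smul' := fun c M => Matrix.smul_mulVec c M v }
  have h3 : HasDerivAt (fun s : ℝ => (NormedSpace.exp ((s:ℂ) • (-A))).mulVec v)
      ((NormedSpace.exp ((t:ℂ) • (-A)) * (-A)).mulVec v) t := by
    have := ((LinearMap.toContinuousLinearMap L).hasFDerivAt.restrictScalars ℝ).comp_hasDerivAt t h2
    exact this
  have hc : NormedSpace.exp ((t:ℂ) • (-A)) * (-A) = (-A) * NormedSpace.exp ((t:ℂ) • (-A)) :=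
    (((Commute.refl (-A)).smul_left ((t:ℂ))).exp_left).eq
  rw [hc] at h3
  have : ∀ s : ℝ, -(s:ℂ) • A = (s:ℂ) • (-A) := fun s => by
    rw [neg_smul, smul_neg]
  simp only [this]
  convert h3 using 1
  simp [Matrix.neg_mulVec, Matrix.mulVec_mulVec]

private theorem HasDerivAt.creal {g : ℝ → ℂ} {d : ℂ} {τ : ℝ} (h : HasDerivAt g d τ) :
    HasDerivAt (fun x => (g x).re) d.re τ := by
  exact (Complex.reCLM.hasFDerivAt.comp_hasDerivAt τ h)

private theorem HasDerivAt.cimag {g : ℝ → ℂ} {d : ℂ} {τ : ℝ} (h : HasDerivAt g d τ) :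
    HasDerivAt (fun x => (g x).im) d.im τ := by
  exact (Complex.imCLM.hasFDerivAt.comp_hasDerivAt τ h)

private theorem keyIneq (α k g x1 x2 x3 x4 : ℝ) (hα : 0 < α) (hk : 0 < k) (hg0 : 0 ≤ g)
    (hg : g ≤ (2/3) * (α*k^2/(2*(2*α^2+k^2)))) :
    (((-2*α*x1 - k*x4)*x1 + x1*(-2*α*x1 - k*x4)) +
      ((-2*α*x2 + k*x3)*x2 + x2*(-2*α*x2 + k*x3)) +
      ((-(k*x2))*x3 + x3*(-(k*x2))) +
      ((k*x1)*x4 + x4*(k*x1)) +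
      (α*k/(2*α^2+k^2))*(((k*x1)*x1 + x4*(-2*α*x1 - k*x4)) -
         ((-(k*x2))*x2 + x3*(-2*α*x2 + k*x3))))
    ≤ -g * (x1*x1 + x2*x2 + x3*x3 + x4*x4 + (α*k/(2*α^2+k^2))*(x4*x1 - x3*x2)) := by
  have hd : (0:ℝ) < 2*α^2+k^2 := by positivity
  have h2d : (0:ℝ) < 2*(2*α^2+k^2) := by positivity
  have hnum : (-(4*α*(x1^2+x2^2)))*(2*(2*α^2+k^2)) +
      (2*(α*k))*(k*(x1^2+x2^2) - k*(x3^2+x4^2) - 2*α*(x4*x1-x3*x2))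
      ≤ -(α*k^2)*(x1^2+x2^2+x3^2+x4^2) := by
    nlinarith [mul_nonneg hα.le (sq_nonneg (2*α*x1 + k*x4)),
      mul_nonneg hα.le (sq_nonneg (2*α*x1 - k*x4)),
      mul_nonneg hα.le (sq_nonneg (2*α*x2 + k*x3)),
      mul_nonneg hα.le (sq_nonneg (2*α*x2 - k*x3)),
      mul_nonneg (mul_nonneg (mul_nonneg hα.le hα.le) hα.le) (sq_nonneg x1),
      mul_nonneg (mul_nonneg (mul_nonneg hα.le hα.le) hα.le) (sq_nonneg x2),
      mul_nonneg hα.le (mul_nonneg (sq_nonneg k) (sq_nonneg x1)),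
      mul_nonneg hα.le (mul_nonneg (sq_nonneg k) (sq_nonneg x2))]
  have e2 : -4*α*(x1^2+x2^2) +
      (α*k/(2*α^2+k^2))*(k*(x1^2+x2^2) - k*(x3^2+x4^2) - 2*α*(x4*x1 - x3*x2))
      ≤ -(α*k^2/(2*(2*α^2+k^2)))*(x1^2+x2^2+x3^2+x4^2) := by
    have eL : -4*α*(x1^2+x2^2) +
        (α*k/(2*α^2+k^2))*(k*(x1^2+x2^2) - k*(x3^2+x4^2) - 2*α*(x4*x1 - x3*x2))
        = ((-(4*α*(x1^2+x2^2)))*(2*(2*α^2+k^2)) +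
          (2*(α*k))*(k*(x1^2+x2^2) - k*(x3^2+x4^2) - 2*α*(x4*x1-x3*x2))) / (2*(2*α^2+k^2)) := by
      field_simp
    have eR : -(α*k^2/(2*(2*α^2+k^2)))*(x1^2+x2^2+x3^2+x4^2)
        = (-(α*k^2)*(x1^2+x2^2+x3^2+x4^2)) / (2*(2*α^2+k^2)) := by
      field_simp
    rw [eL, eR]
    exact (div_le_div_iff_of_pos_right h2d).mpr hnum
  have hs0 : 0 ≤ α*k/(2*α^2+k^2) := by positivity
  have hs1 : α*k/(2*α^2+k^2) ≤ 1 := by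
    rw [div_le_one hd]; nlinarith [sq_nonneg (α-k), sq_nonneg α]
  have hm : (3/2)*g ≤ α*k^2/(2*(2*α^2+k^2)) := by nlinarith
  have hQ : (0:ℝ) ≤ x1^2+x2^2+x3^2+x4^2 := by positivity
  have hEup : x1*x1 + x2*x2 + x3*x3 + x4*x4 + (α*k/(2*α^2+k^2))*(x4*x1 - x3*x2)
      ≤ (3/2)*(x1^2+x2^2+x3^2+x4^2) := by
    nlinarith [sq_nonneg (x1 + x4), sq_nonneg (x1 - x4), sq_nonneg (x2 + x3),
      sq_nonneg (x2 - x3), hs0, hs1, sq_nonneg x1, sq_nonneg x2, sq_nonneg x3, sq_nonneg x4]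
  have e1 : (((-2*α*x1 - k*x4)*x1 + x1*(-2*α*x1 - k*x4)) +
      ((-2*α*x2 + k*x3)*x2 + x2*(-2*α*x2 + k*x3)) +
      ((-(k*x2))*x3 + x3*(-(k*x2))) +
      ((k*x1)*x4 + x4*(k*x1)) +
      (α*k/(2*α^2+k^2))*(((k*x1)*x1 + x4*(-2*α*x1 - k*x4)) -
         ((-(k*x2))*x2 + x3*(-2*α*x2 + k*x3))))
      = -4*α*(x1^2+x2^2) +
        (α*k/(2*α^2+k^2))*(k*(x1^2+x2^2) - k*(x3^2+x4^2) - 2*α*(x4*x1 - x3*x2)) := by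
    ring
  rw [e1]
  refine e2.trans ?_
  nlinarith [mul_le_mul_of_nonneg_right hm hQ, mul_le_mul_of_nonneg_left hEup hg0]

private theorem real_block (α k g : ℝ) (hα : 0 < α) (hk : 0 < k) (hg0 : 0 ≤ g)
    (hg : g ≤ (2/3) * (α*k^2/(2*(2*α^2+k^2))))
    (X1 X2 X3 X4 : ℝ → ℝ)
    (h1 : ∀ τ : ℝ, HasDerivAt X1 (-2*α*X1 τ - k*X4 τ) τ)
    (h2 : ∀ τ : ℝ, HasDerivAt X2 (-2*α*X2 τ + k*X3 τ) τ)
    (h3 : ∀ τ : ℝ, HasDerivAt X3 (-(k*X2 τ)) τ)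
    (h4 : ∀ τ : ℝ, HasDerivAt X4 (k*X1 τ) τ)
    (t : ℝ) (ht : 0 ≤ t) :
    X1 t^2+X2 t^2+X3 t^2+X4 t^2 ≤
      3*Real.exp (-g*t)*(X1 0^2+X2 0^2+X3 0^2+X4 0^2) := by
  have hd : (0:ℝ) < 2*α^2+k^2 := by positivity
  have hs0 : 0 ≤ α*k/(2*α^2+k^2) := by positivity
  have hs1 : α*k/(2*α^2+k^2) ≤ 1 := by
    rw [div_le_one hd]; nlinarith [sq_nonneg (α-k), sq_nonneg α]
  set E : ℝ → ℝ := fun τ =>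
    X1 τ*X1 τ + X2 τ*X2 τ + X3 τ*X3 τ + X4 τ*X4 τ +
      (α*k/(2*α^2+k^2))*(X4 τ*X1 τ - X3 τ*X2 τ) with hE
  have hEQlow : ∀ τ, (1/2)*(X1 τ^2+X2 τ^2+X3 τ^2+X4 τ^2) ≤ E τ := by
    intro τ
    simp only [hE]
    nlinarith [sq_nonneg (X1 τ + X4 τ), sq_nonneg (X1 τ - X4 τ),
      sq_nonneg (X2 τ + X3 τ), sq_nonneg (X2 τ - X3 τ), hs0, hs1,
      sq_nonneg (X1 τ), sq_nonneg (X2 τ), sq_nonneg (X3 τ), sq_nonneg (X4 τ)]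
  have hEQhigh : ∀ τ, E τ ≤ (3/2)*(X1 τ^2+X2 τ^2+X3 τ^2+X4 τ^2) := by
    intro τ
    simp only [hE]
    nlinarith [sq_nonneg (X1 τ + X4 τ), sq_nonneg (X1 τ - X4 τ),
      sq_nonneg (X2 τ + X3 τ), sq_nonneg (X2 τ - X3 τ), hs0, hs1,
      sq_nonneg (X1 τ), sq_nonneg (X2 τ), sq_nonneg (X3 τ), sq_nonneg (X4 τ)]
  have hE0 : ∀ τ, 0 ≤ E τ := fun τ => le_trans (by positivity) (hEQlow τ)
  have hDE : ∀ τ : ℝ, HasDerivAt E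
      (((-2*α*X1 τ - k*X4 τ)*X1 τ + X1 τ*(-2*α*X1 τ - k*X4 τ)) +
        ((-2*α*X2 τ + k*X3 τ)*X2 τ + X2 τ*(-2*α*X2 τ + k*X3 τ)) +
        ((-(k*X2 τ))*X3 τ + X3 τ*(-(k*X2 τ))) +
        ((k*X1 τ)*X4 τ + X4 τ*(k*X1 τ)) +
        (α*k/(2*α^2+k^2))*(((k*X1 τ)*X1 τ + X4 τ*(-2*α*X1 τ - k*X4 τ)) -
           ((-(k*X2 τ))*X2 τ + X3 τ*(-2*α*X2 τ + k*X3 τ)))) τ := by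
    intro τ
    exact (((((h1 τ).mul (h1 τ)).add ((h2 τ).mul (h2 τ))).add
      ((h3 τ).mul (h3 τ))).add ((h4 τ).mul (h4 τ))).add
      ((((h4 τ).mul (h1 τ)).sub ((h3 τ).mul (h2 τ))).const_mul (α*k/(2*α^2+k^2)))
  have key : ∀ τ : ℝ,
      (((-2*α*X1 τ - k*X4 τ)*X1 τ + X1 τ*(-2*α*X1 τ - k*X4 τ)) +
        ((-2*α*X2 τ + k*X3 τ)*X2 τ + X2 τ*(-2*α*X2 τ + k*X3 τ)) +
        ((-(k*X2 τ))*X3 τ + X3 τ*(-(k*X2 τ))) +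
        ((k*X1 τ)*X4 τ + X4 τ*(k*X1 τ)) +
        (α*k/(2*α^2+k^2))*(((k*X1 τ)*X1 τ + X4 τ*(-2*α*X1 τ - k*X4 τ)) -
           ((-(k*X2 τ))*X2 τ + X3 τ*(-2*α*X2 τ + k*X3 τ)))) ≤ -g * E τ := by
    intro τ
    simp only [hE]
    exact keyIneq α k g (X1 τ) (X2 τ) (X3 τ) (X4 τ) hα hk hg0 hg
  set N : ℝ → ℝ := fun τ => E τ * Real.exp (g*τ) with hN
  have hDN : ∀ τ : ℝ, HasDerivAt N
      ((((-2*α*X1 τ - k*X4 τ)*X1 τ + X1 τ*(-2*α*X1 τ - k*X4 τ)) +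
        ((-2*α*X2 τ + k*X3 τ)*X2 τ + X2 τ*(-2*α*X2 τ + k*X3 τ)) +
        ((-(k*X2 τ))*X3 τ + X3 τ*(-(k*X2 τ))) +
        ((k*X1 τ)*X4 τ + X4 τ*(k*X1 τ)) +
        (α*k/(2*α^2+k^2))*(((k*X1 τ)*X1 τ + X4 τ*(-2*α*X1 τ - k*X4 τ)) -
           ((-(k*X2 τ))*X2 τ + X3 τ*(-2*α*X2 τ + k*X3 τ)))) * Real.exp (g*τ)
        + E τ * (Real.exp (g*τ) * (g*1))) τ := by
    intro τ
    exact (hDE τ).mul (((hasDerivAt_id τ).const_mul g).exp)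
  have hanti : Antitone N := by
    apply antitone_of_deriv_nonpos
    · exact fun τ => ((hDN τ).differentiableAt)
    · intro τ
      rw [(hDN τ).deriv]
      have h1' := key τ
      have h2' := Real.exp_pos (g*τ)
      have h3' := hE0 τ
      nlinarith [mul_le_mul_of_nonneg_right h1' h2'.le]
  have hEt : E t * Real.exp (g*t) ≤ E 0 := by
    have h0 : N 0 = E 0 := by simp [hN]
    have := hanti ht
    rw [h0] at this
    simpa [hN] using this
  have hexp : (0:ℝ) < Real.exp (g*t) := Real.exp_pos _
  have hEfin : E t ≤ E 0 * Real.exp (-g*t) := by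
    rw [show (-g*t) = -(g*t) by ring, Real.exp_neg, ← div_eq_mul_inv, le_div_iff₀ hexp]
    exact hEt
  have l1 := hEQlow t
  have l2 := hEQhigh 0
  have hep := Real.exp_pos (-g*t)
  clear_value E N
  have l3 : E 0 * Real.exp (-g*t) ≤ (3/2*(X1 0^2+X2 0^2+X3 0^2+X4 0^2)) * Real.exp (-g*t) :=
    mul_le_mul_of_nonneg_right l2 hep.le
  nlinarith [l1, hEfin, l3]

private theorem block_decay (α k g : ℝ) (hα : 0 < α) (hk : 0 < k) (hg0 : 0 ≤ g)
    (hg : g ≤ (2/3) * (α*k^2/(2*(2*α^2+k^2))))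
    (u w : ℝ → ℂ)
    (hu : ∀ τ : ℝ, HasDerivAt u (-(α:ℂ)*(u τ + w τ) + Complex.I*(k:ℂ)*(u τ)) τ)
    (hw : ∀ τ : ℝ, HasDerivAt w (-(α:ℂ)*(u τ + w τ) - Complex.I*(k:ℂ)*(w τ)) τ)
    (t : ℝ) (ht : 0 ≤ t) :
    ‖u t‖^2 + ‖w t‖^2 ≤
      3 * Real.exp (-g*t) * (‖u 0‖^2 + ‖w 0‖^2) := by
  have h1 : ∀ τ : ℝ, HasDerivAt (fun τ => (u τ + w τ).re)
      (-2*α*(u τ + w τ).re - k*(u τ - w τ).im) τ := by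
    intro τ
    have := ((hu τ).add (hw τ)).creal
    convert this using 1
    simp [Complex.add_re, Complex.add_im, Complex.sub_re, Complex.sub_im,
      Complex.neg_re, Complex.neg_im, Complex.mul_re, Complex.mul_im]
    simp [Complex.mul_re, Complex.mul_im]
    ring
  have h2 : ∀ τ : ℝ, HasDerivAt (fun τ => (u τ + w τ).im)
      (-2*α*(u τ + w τ).im + k*(u τ - w τ).re) τ := by
    intro τ
    have := ((hu τ).add (hw τ)).cimag
    convert this using 1
    simp [Complex.add_re, Complex.add_im, Complex.sub_re, Complex.sub_im,
      Complex.neg_re, Complex.neg_im, Complex.mul_re, Complex.mul_im]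
    simp [Complex.mul_re, Complex.mul_im]
    ring
  have h3 : ∀ τ : ℝ, HasDerivAt (fun τ => (u τ - w τ).re)
      (-(k*(u τ + w τ).im)) τ := by
    intro τ
    have := ((hu τ).sub (hw τ)).creal
    convert this using 1
    simp [Complex.add_re, Complex.add_im, Complex.sub_re, Complex.sub_im,
      Complex.neg_re, Complex.neg_im, Complex.mul_re, Complex.mul_im]
    simp [Complex.mul_re, Complex.mul_im]
    ring
  have h4 : ∀ τ : ℝ, HasDerivAt (fun τ => (u τ - w τ).im)
      (k*(u τ + w τ).re) τ := by
    intro τ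
    have := ((hu τ).sub (hw τ)).cimag
    convert this using 1
    simp [Complex.add_re, Complex.add_im, Complex.sub_re, Complex.sub_im,
      Complex.neg_re, Complex.neg_im, Complex.mul_re, Complex.mul_im]
    simp [Complex.mul_re, Complex.mul_im]
    ring
  have main := real_block α k g hα hk hg0 hg _ _ _ _ h1 h2 h3 h4 t ht
  have habs : ∀ τ : ℝ, ‖u τ‖^2 + ‖w τ‖^2
      = ((u τ + w τ).re^2 + (u τ + w τ).im^2 + (u τ - w τ).re^2 + (u τ - w τ).im^2)/2 := by
    intro τ
    rw [Complex.sq_norm, Complex.sq_norm, Complex.normSq_apply, Complex.normSq_apply]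
    simp [Complex.add_re, Complex.add_im, Complex.sub_re, Complex.sub_im]
    ring
  rw [habs t, habs 0]
  linarith [main]

private theorem rate_le (a α r β : ℝ) (ha : 0 < a) (hα : 0 < α) (hr : 0 < r)
    (haβ : a ≤ β) (hr2 : r ≤ 2*α) :
    2*(a^2/(6+12*a^2))*(r^2/(2*α)) ≤ (2/3) * (α*(r*β)^2/(2*(2*α^2+(r*β)^2))) := by
  have hβ : 0 < β := lt_of_lt_of_le ha haβ
  have h1 : 2*(a^2/(6+12*a^2))*(r^2/(2*α)) = (a^2*r^2)/((6+12*a^2)*α) := by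
    field_simp
  have h2 : (2/3) * (α*(r*β)^2/(2*(2*α^2+(r*β)^2))) = (α*(r*β)^2)/(3*(2*α^2+(r*β)^2)) := by
    field_simp
  rw [h1, h2, div_le_div_iff₀ (by positivity) (by positivity)]
  have ha2 : a^2 ≤ β^2 := by nlinarith
  have hr4 : r^2 ≤ 4*α^2 := by nlinarith
  nlinarith [mul_le_mul_of_nonneg_right ha2 (by positivity : (0:ℝ) ≤ 6*r^2*α^2),
    mul_le_mul_of_nonneg_right hr4 (by positivity : (0:ℝ) ≤ 3*a^2*r^2*β^2)]

end Auxiliary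

open NormedSpace Complex Matrix in
set_option maxHeartbeats 2000000 in
/-- Sharp pointwise estimate: `‖exp(−tB(r))v‖ ≤ C e^{−c t η(r)} ‖v‖` with
`η(r) = r^{2−2ρ}/(1+r^{2θ−2ρ})`. -/
theorem stmt10 (a b ρ θ : ℝ) (ha : 0 < a) (hab : a < b)
    (hρ0 : 0 ≤ ρ) (hρ : ρ < 1/2) (hθ : 1/2 < θ) (hθ1 : θ ≤ 1) :
    ∃ C > (0:ℝ), ∃ c > (0:ℝ), ∀ r : ℝ, 0 < r → ∀ t : ℝ, 0 ≤ t → ∀ v : Fin 4 → ℂ,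
      euclNorm ((NormedSpace.exp (-(t : ℂ) • Bmat a b ρ θ r)).mulVec v)
        ≤ C * Real.exp (-c * t * (r ^ (2 - 2*ρ) / (1 + r ^ (2*θ - 2*ρ)))) * euclNorm v := by
  have hb : 0 < b := ha.trans hab
  refine ⟨2, by norm_num, a^2/(6+12*a^2), div_pos (pow_pos ha 2) (by nlinarith), ?_⟩
  intro r hr t ht v
  set c : ℝ := a^2/(6+12*a^2) with hcdef
  have hc0 : 0 < c := div_pos (pow_pos ha 2) (by nlinarith)
  set α : ℝ := (1/2) * (r ^ (2*ρ) + r ^ (2*θ)) with hαdef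
  have hρr : 0 < r ^ (2*ρ) := Real.rpow_pos_of_pos hr _
  have hθr : 0 < r ^ (2*θ) := Real.rpow_pos_of_pos hr _
  have hα : 0 < α := by rw [hαdef]; positivity
  have hr2α : r ≤ 2*α := by
    rcases le_total r 1 with h1 | h1
    · have h2 : r ^ (1:ℝ) ≤ r ^ (2*ρ) := Real.rpow_le_rpow_of_exponent_ge hr h1 (by linarith)
      rw [Real.rpow_one] at h2
      rw [hαdef]; linarith
    · have h2 : r ^ (1:ℝ) ≤ r ^ (2*θ) := Real.rpow_le_rpow_of_exponent_le h1 (by linarith)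
      rw [Real.rpow_one] at h2
      rw [hαdef]; linarith
  set g : ℝ := 2*c*(r^2/(2*α)) with hgdef
  have hg0 : 0 ≤ g := by rw [hgdef]; positivity
  set B : Matrix (Fin 4) (Fin 4) ℂ := Bmat a b ρ θ r with hBdef
  set f : ℝ → (Fin 4 → ℂ) := fun τ => (NormedSpace.exp (-(τ:ℂ) • B)).mulVec v with hfdef
  have hco : ∀ (τ : ℝ) (i : Fin 4), HasDerivAt (fun τ => f τ i) (-(B.mulVec (f τ) i)) τ := by
    intro τ i
    have h := hasDerivAt_pi.mp (matexp_hasDerivAt B v τ) i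
    simpa [hfdef] using h
  have hmv0 : ∀ (x : Fin 4 → ℂ),
      B.mulVec x 0 = (α:ℂ)*(x 0 + x 2) - Complex.I*((r*b : ℝ):ℂ)*(x 0) := by
    intro x; rw [hBdef, hαdef]
    simp [Bmat, B0, B1, Matrix.mulVec, dotProduct, Fin.sum_univ_four]
    push_cast; ring
  have hmv1 : ∀ (x : Fin 4 → ℂ),
      B.mulVec x 1 = (α:ℂ)*(x 1 + x 3) - Complex.I*((r*a : ℝ):ℂ)*(x 1) := by
    intro x; rw [hBdef, hαdef]
    simp [Bmat, B0, B1, Matrix.mulVec, dotProduct, Fin.sum_univ_four]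
    push_cast; ring
  have hmv2 : ∀ (x : Fin 4 → ℂ),
      B.mulVec x 2 = (α:ℂ)*(x 0 + x 2) + Complex.I*((r*b : ℝ):ℂ)*(x 2) := by
    intro x; rw [hBdef, hαdef]
    simp [Bmat, B0, B1, Matrix.mulVec, dotProduct, Fin.sum_univ_four]
    push_cast; ring
  have hmv3 : ∀ (x : Fin 4 → ℂ),
      B.mulVec x 3 = (α:ℂ)*(x 1 + x 3) + Complex.I*((r*a : ℝ):ℂ)*(x 3) := by
    intro x; rw [hBdef, hαdef]
    simp [Bmat, B0, B1, Matrix.mulVec, dotProduct, Fin.sum_univ_four]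
    push_cast; ring
  have hub : ∀ τ : ℝ, HasDerivAt (fun τ => f τ 0)
      (-(α:ℂ)*(f τ 0 + f τ 2) + Complex.I*((r*b : ℝ):ℂ)*(f τ 0)) τ := by
    intro τ
    have h := hco τ 0
    rw [hmv0 (f τ)] at h
    convert h using 1; ring
  have hwb : ∀ τ : ℝ, HasDerivAt (fun τ => f τ 2)
      (-(α:ℂ)*(f τ 0 + f τ 2) - Complex.I*((r*b : ℝ):ℂ)*(f τ 2)) τ := by
    intro τ
    have h := hco τ 2
    rw [hmv2 (f τ)] at h
    convert h using 1; ring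
  have hua : ∀ τ : ℝ, HasDerivAt (fun τ => f τ 1)
      (-(α:ℂ)*(f τ 1 + f τ 3) + Complex.I*((r*a : ℝ):ℂ)*(f τ 1)) τ := by
    intro τ
    have h := hco τ 1
    rw [hmv1 (f τ)] at h
    convert h using 1; ring
  have hwa : ∀ τ : ℝ, HasDerivAt (fun τ => f τ 3)
      (-(α:ℂ)*(f τ 1 + f τ 3) - Complex.I*((r*a : ℝ):ℂ)*(f τ 3)) τ := by
    intro τ
    have h := hco τ 3
    rw [hmv3 (f τ)] at h
    convert h using 1; ring
  have hgb : g ≤ (2/3) * (α*(r*b)^2/(2*(2*α^2+(r*b)^2))) := by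
    rw [hgdef, hcdef]; exact rate_le a α r b ha hα hr hab.le hr2α
  have hga : g ≤ (2/3) * (α*(r*a)^2/(2*(2*α^2+(r*a)^2))) := by
    rw [hgdef, hcdef]; exact rate_le a α r a ha hα hr le_rfl hr2α
  have hdb := block_decay α (r*b) g hα (by positivity) hg0 hgb
    (fun τ => f τ 0) (fun τ => f τ 2) hub hwb t ht
  have hda := block_decay α (r*a) g hα (by positivity) hg0 hga
    (fun τ => f τ 1) (fun τ => f τ 3) hua hwa t ht
  have hf0 : f 0 = v := by
    rw [hfdef]
    simp [Matrix.one_mulVec]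
  rw [hf0] at hdb hda
  have hS : (∑ i, ‖f t i‖^2) ≤ 3*Real.exp (-g*t) * (∑ i, ‖v i‖^2) := by
    rw [Fin.sum_univ_four, Fin.sum_univ_four]
    linarith [hdb, hda]
  have hSv0 : (0:ℝ) ≤ ∑ i, ‖v i‖^2 := by positivity
  have hη : r ^ (2 - 2*ρ) / (1 + r ^ (2*θ - 2*ρ)) = r^2/(2*α) := by
    have h2 : r ^ ((2:ℝ)) = r^(2:ℕ) := by
      rw [← Real.rpow_natCast r 2]; norm_num
    rw [Real.rpow_sub hr, Real.rpow_sub hr, hαdef, h2]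
    field_simp
  have hgoal : euclNorm (f t) ≤ 2 * Real.exp (-c * t * (r ^ (2 - 2*ρ) / (1 + r ^ (2*θ - 2*ρ)))) * euclNorm v := by
    rw [hη]
    simp only [euclNorm]
    calc Real.sqrt (∑ i, ‖f t i‖^2)
        ≤ Real.sqrt (4*Real.exp (-g*t) * ∑ i, ‖v i‖^2) := by
          apply Real.sqrt_le_sqrt
          nlinarith [Real.exp_pos (-g*t)]
      _ = 2 * Real.exp (-g*t/2) * Real.sqrt (∑ i, ‖v i‖^2) := by
          rw [Real.sqrt_mul (by positivity : (0:ℝ) ≤ 4*Real.exp (-g*t)),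
            Real.sqrt_mul (by norm_num : (0:ℝ) ≤ 4)]
          rw [show Real.sqrt 4 = 2 by
            rw [show (4:ℝ) = 2^2 by norm_num, Real.sqrt_sq (by norm_num : (0:ℝ) ≤ 2)]]
          rw [← Real.exp_half]
      _ = 2 * Real.exp (-c * t * (r^2/(2*α))) * Real.sqrt (∑ i, ‖v i‖^2) := by
          rw [show -g*t/2 = -c * t * (r^2/(2*α)) by rw [hgdef]; ring]
  exact hgoal


end
end

section
/- (Workhorse integral estimate) Let s ≥ 0, c > 0, ε > 0 and 0 ≤ ρ < 1/2. Then there exists a constant C > 0 such that for every t ≥ 0, ∫_{ξ ∈ ℝ², |ξ| < ε} |ξ|^{2s} e^{−2c|ξ|^{2−2ρ} t} dξ ≤ C (1+t)^{−(2s+2)/(2−2ρ)}, where the integral is with respect to two-dimensional Lebesgue measure. -/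
open MeasureTheory Real Set

/-- Workhorse integral estimate: for `s ≥ 0`, `c > 0`, `ε > 0`, `0 ≤ ρ < 1/2`, there is `C > 0`
with `∫_{|ξ|<ε} |ξ|^{2s} e^{−2c|ξ|^{2−2ρ}t} dξ ≤ C (1+t)^{−(2s+2)/(2−2ρ)}` for every `t ≥ 0`. -/
theorem stmt12 (s c ε ρ : ℝ) (hs : 0 ≤ s) (hc : 0 < c) (hε : 0 < ε)
    (hρ0 : 0 ≤ ρ) (hρ : ρ < 1/2) :
    ∃ C > (0:ℝ), ∀ t : ℝ, 0 ≤ t →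
      ∫ ξ in {ξ : EuclideanSpace ℝ (Fin 2) | ‖ξ‖ < ε},
          ‖ξ‖ ^ (2*s) * Real.exp (-2 * c * ‖ξ‖ ^ (2 - 2*ρ) * t)
        ≤ C * (1 + t) ^ (-((2*s + 2) / (2 - 2*ρ))) := by
  set κ : ℝ := 2 - 2*ρ with hκdef
  have hκ1 : 1 < κ := by simp only [hκdef]; linarith
  have hκ0 : 0 < κ := by linarith
  set E := EuclideanSpace ℝ (Fin 2)
  have hdim : Module.finrank ℝ E = 2 := finrank_euclideanSpace_fin
  set B : ℝ := (volume (Metric.ball (0:E) 1)).toReal with hB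
  have hB0 : 0 < B := by
    rw [hB]
    exact ENNReal.toReal_pos (Metric.measure_ball_pos volume _ one_pos).ne'
      (measure_ball_lt_top).ne
  set α : ℝ := (2*s + 2) / κ with hα
  have hα0 : 0 < α := by positivity
  have hΓ : 0 < Real.Gamma α := Real.Gamma_pos_of_pos hα0
  refine ⟨2 * B * (Real.exp (c * ε ^ κ) * (c ^ (-α) * ((1/κ) * Real.Gamma α))), by
    positivity, ?_⟩
  intro t ht
  have h1t : (0:ℝ) < 1 + t := by linarith
  have hmeas : MeasurableSet {ξ : E | ‖ξ‖ < ε} :=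
    measurableSet_lt measurable_norm measurable_const
  set f : ℝ → ℝ := fun r => r ^ (2*s) * Real.exp (-2 * c * r ^ κ * t) with hf
  set g : ℝ → ℝ := (Set.Iio ε).indicator f with hg
  have step1 : ∫ ξ in {ξ : E | ‖ξ‖ < ε},
        ‖ξ‖ ^ (2*s) * Real.exp (-2 * c * ‖ξ‖ ^ κ * t)
      = ∫ ξ : E, g ‖ξ‖ := by
    rw [← integral_indicator hmeas]
    rfl
  have step2 : ∫ ξ : E, g ‖ξ‖
      = 2 * (B * ∫ y in Ioi (0:ℝ), y ^ (2-1) • g y) := by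
    rw [integral_fun_norm_addHaar volume g, hdim]
    simp [nsmul_eq_mul, smul_eq_mul, mul_assoc]
    exact Or.inl rfl
  rw [step1, step2]
  have key : ∫ y in Ioi (0:ℝ), y ^ (2-1) • g y
      ≤ ∫ y in Ioi (0:ℝ),
          Real.exp (c * ε ^ κ) * (y ^ (1 + 2*s) * Real.exp (-(c * (1+t)) * y ^ κ)) := by
    refine integral_mono_of_nonneg ?_ ?_ ?_
    · filter_upwards [ae_restrict_mem measurableSet_Ioi] with y hy
      have hy0 : (0:ℝ) < y := hy
      have hgy : ∀ r, 0 < r → 0 ≤ g r := by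
        intro r hr
        rw [hg]
        by_cases hrε : r < ε
        · rw [Set.indicator_of_mem (show r ∈ Set.Iio ε from hrε), hf]
          positivity
        · rw [Set.indicator_of_notMem (show r ∉ Set.Iio ε from hrε)]
      simp only [smul_eq_mul]
      exact mul_nonneg (by positivity) (hgy y hy0)
    · exact (integrableOn_rpow_mul_exp_neg_mul_rpow (by linarith) hκ0
        (by positivity)).const_mul _
    · filter_upwards [ae_restrict_mem measurableSet_Ioi] with y hy
      have hy0 : (0:ℝ) < y := hy
      simp only [smul_eq_mul]
      by_cases hyε : y < ε
      · rw [hg, Set.indicator_of_mem (show y ∈ Set.Iio ε from hyε), hf]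
        have h1 : y ^ (2-1) * (y ^ (2*s) * Real.exp (-2 * c * y ^ κ * t))
            = y ^ (1 + 2*s) * Real.exp (-2 * c * y ^ κ * t) := by
          rw [Real.rpow_add hy0, Real.rpow_one]
          norm_num
          ring
        have h2 : Real.exp (c * ε ^ κ) * (y ^ (1 + 2*s) * Real.exp (-(c * (1+t)) * y ^ κ))
            = y ^ (1 + 2*s) * Real.exp (-(c * (1+t)) * y ^ κ + c * ε ^ κ) := by
          rw [Real.exp_add]; ring
        rw [h1, h2]
        refine mul_le_mul_of_nonneg_left ?_ (Real.rpow_nonneg hy0.le _)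
        rw [Real.exp_le_exp]
        have hyκ : y ^ κ ≤ ε ^ κ := Real.rpow_le_rpow hy0.le hyε.le hκ0.le
        have hyκ0 : (0:ℝ) ≤ y ^ κ := Real.rpow_nonneg hy0.le _
        nlinarith [mul_nonneg (mul_nonneg hc.le hyκ0) ht,
          mul_le_mul_of_nonneg_left hyκ hc.le]
      · have hz : g y = 0 :=
          Set.indicator_of_notMem (show y ∉ Set.Iio ε from hyε) f
        rw [hz, mul_zero]
        positivity
  have hJ : ∫ y in Ioi (0:ℝ),
        Real.exp (c * ε ^ κ) * (y ^ (1 + 2*s) * Real.exp (-(c * (1+t)) * y ^ κ))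
      = Real.exp (c * ε ^ κ) *
        ((c * (1+t)) ^ (-α) * (1/κ) * Real.Gamma α) := by
    rw [integral_const_mul, integral_rpow_mul_exp_neg_mul_rpow hκ0 (by linarith)
      (by positivity)]
    have h1 : (1 + 2*s + 1) / κ = α := by rw [hα]; ring_nf
    have h2 : -(1 + 2*s + 1) / κ = -α := by rw [hα]; ring_nf
    rw [h1, h2]
  calc 2 * (B * ∫ y in Ioi (0:ℝ), y ^ (2-1) • g y)
      ≤ 2 * (B * ∫ y in Ioi (0:ℝ),
          Real.exp (c * ε ^ κ) * (y ^ (1 + 2*s) * Real.exp (-(c * (1+t)) * y ^ κ))) := by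
        gcongr
    _ = 2 * B * (Real.exp (c * ε ^ κ) * (c ^ (-α) * ((1/κ) * Real.Gamma α))) *
          (1 + t) ^ (-α) := by
        rw [hJ, Real.mul_rpow hc.le h1t.le]
        ring
end
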